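/- arXiv:2212.06256 — 3 statements merged into one kernel-verified Lean document; each statement's English description precedes it below -/
import Mathlib

section
/- Let F be a field of characteristic p ≥ 0, let V be a nonzero FS_n-module, and set r := 𝔯(V). If p ≠ 2 then dim V ≥ C(⌊n/2⌋, r), and if p = 2 then dim V ≥ 2^r · C(⌊n/3⌋, r), where C(a,b) denotes the binomial coefficient. -/
/-!
Formalization of statements from "Level, rank, and tensor growth of representations of
symmetric groups" by Kleshchev, Larsen, Tiep.
-/

namespace KLT

open scoped Classical TensorProduct

/-- The row lengths of a partition, `0`-indexed: `rowLen lam 0` is the largest part `λ₁`. -/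
def rowLen {n : ℕ} (lam : n.Partition) (i : ℕ) : ℕ :=
  ((lam.parts.sort (· ≤ ·)).reverse).getD i 0

/-- The level `𝔩(λ) = n - λ₁` of a partition `λ` of `n`. -/
def level {n : ℕ} (lam : n.Partition) : ℕ := n - rowLen lam 0

/-- The level `𝔩(λ') = n - λ'₁` of the conjugate partition `λ'` of `λ`
(`λ'₁` is the number of parts of `λ`). -/
def conjLevel {n : ℕ} (lam : n.Partition) : ℕ := n - Multiset.card lam.parts

/-- A partition is `p`-regular if (when `p > 0`) no part is repeated `p` or more times.
For `p = 0` every partition is `p`-regular. -/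
def PRegular {n : ℕ} (p : ℕ) (lam : n.Partition) : Prop :=
  0 < p → ∀ a : ℕ, lam.parts.count a < p

/-- The set of cells (boxes) of the Young diagram of `lam`, `0`-indexed:
`(i, j)` with `j < λ_{i+1}`. -/
def Cells {n : ℕ} (lam : n.Partition) : Set (ℕ × ℕ) := {c | c.2 < rowLen lam c.1}

/-- A bijective filling of the Young diagram of `lam` by `{1, …, n}` (modelled on `Fin n`):
`T x` is the cell occupied by `x`. -/
def IsTableau {n : ℕ} (lam : n.Partition) (T : Fin n → ℕ × ℕ) : Prop :=
  Function.Injective T ∧ Set.range T = Cells lam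

/-- `λ̄`: the partition of `𝔩(λ)` obtained by deleting the first row of `λ`. -/
def barPartition {n : ℕ} (lam : n.Partition) : (level lam).Partition where
  parts := (((lam.parts.sort (· ≤ ·)).reverse).tail : Multiset ℕ)
  parts_pos := by
    intro a ha
    apply lam.parts_pos (i := a)
    have h1 : a ∈ ((lam.parts.sort (· ≤ ·)).reverse).tail := by exact_mod_cast ha
    have h2 : a ∈ (lam.parts.sort (· ≤ ·)).reverse := List.mem_of_mem_tail h1
    rw [List.mem_reverse] at h2
    exact (Multiset.mem_sort _).mp h2
  parts_sum := by
    have hsum : ((lam.parts.sort (· ≤ ·)).reverse).sum = n := by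
      rw [List.sum_reverse]
      have h : ((lam.parts.sort (· ≤ ·) : List ℕ) : Multiset ℕ) = lam.parts :=
        Multiset.sort_eq _ _
      calc (lam.parts.sort (· ≤ ·)).sum
          = ((lam.parts.sort (· ≤ ·) : List ℕ) : Multiset ℕ).sum := (Multiset.sum_coe _).symm
        _ = lam.parts.sum := by rw [h]
        _ = n := lam.parts_sum
    show ((((lam.parts.sort (· ≤ ·)).reverse).tail : List ℕ) : Multiset ℕ).sum = level lam
    rcases h : (lam.parts.sort (· ≤ ·)).reverse with _ | ⟨a, t⟩
    · rw [h] at hsum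
      have hn : n = 0 := by simpa using hsum.symm
      simp [level, rowLen, h, hn]
    · rw [h] at hsum
      simp only [List.sum_cons] at hsum
      have ha : rowLen lam 0 = a := by simp [rowLen, h]
      simp only [h, level, ha, List.tail_cons, Multiset.sum_coe]
      omega

/-- The group algebra `F𝔖ₙ` of the symmetric group on `n` letters over the field `F`.
An `F𝔖ₙ`-module is a module over this algebra. -/
abbrev GA (F : Type) [Field F] (n : ℕ) : Type := MonoidAlgebra F (Equiv.Perm (Fin n))

/-- The element of the group algebra corresponding to a permutation. -/
noncomputable def ga (F : Type) [Field F] {n : ℕ} (σ : Equiv.Perm (Fin n)) : GA F n :=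
  MonoidAlgebra.of F (Equiv.Perm (Fin n)) σ

/-- There are `r` transpositions `(aₛ, bₛ)` with all `2r` entries distinct, and a
simultaneous `(-1)`-eigenvector `v ≠ 0` in `V` for all of them. -/
def HasNegSystem (F : Type) [Field F] (n : ℕ) (V : Type*) [AddCommGroup V]
    [Module (GA F n) V] (r : ℕ) : Prop :=
  ∃ (a b : Fin r → Fin n) (v : V),
    Function.Injective (fun x : Fin r × Bool => if x.2 then a x.1 else b x.1) ∧
    v ≠ 0 ∧ ∀ s : Fin r, ga F (Equiv.swap (a s) (b s)) • v = -v

/-- There are `r` transpositions `(aₛ, bₛ)` with all `2r` entries distinct, and a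
simultaneous `(+1)`-eigenvector `v ≠ 0` in `V` for all of them; this computes the
`2`-rank of the sign-twist `V ⊗ sign`. -/
def HasPosSystem (F : Type) [Field F] (n : ℕ) (V : Type*) [AddCommGroup V]
    [Module (GA F n) V] (r : ℕ) : Prop :=
  ∃ (a b : Fin r → Fin n) (v : V),
    Function.Injective (fun x : Fin r × Bool => if x.2 then a x.1 else b x.1) ∧
    v ≠ 0 ∧ ∀ s : Fin r, ga F (Equiv.swap (a s) (b s)) • v = v

/-- The `2`-rank `𝔯₂(V)` of an `F𝔖ₙ`-module `V` (`char F ≠ 2`): the largest `r` such that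
there exist `r` disjoint transpositions admitting a simultaneous `(-1)`-eigenvector in
`V`. -/
noncomputable def rank2 (F : Type) [Field F] (n : ℕ) (V : Type*) [AddCommGroup V]
    [Module (GA F n) V] : ℕ :=
  sSup {r : ℕ | HasNegSystem F n V r}

/-- The `2`-rank `𝔯₂(V ⊗ sign)` of the sign-twist of `V`: the largest `r` such that
there exist `r` disjoint transpositions admitting a simultaneous `(+1)`-eigenvector in
`V`. -/
noncomputable def rank2sign (F : Type) [Field F] (n : ℕ) (V : Type*) [AddCommGroup V]
    [Module (GA F n) V] : ℕ :=
  sSup {r : ℕ | HasPosSystem F n V r}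

/-- The 3-cycle `(i, j, k)`. -/
def cyc3 {n : ℕ} (i j k : Fin n) : Equiv.Perm (Fin n) := Equiv.swap i j * Equiv.swap j k

/-- There are `r` 3-cycles `(aₛ, bₛ, cₛ)` with all `3r` entries distinct, and a
simultaneous `ζ`-eigenvector `v ≠ 0` in `V` for all of them. -/
def HasZetaSystem (F : Type) [Field F] (n : ℕ) (V : Type*) [AddCommGroup V]
    [Module (GA F n) V] (zeta : F) (r : ℕ) : Prop :=
  ∃ (a b c : Fin r → Fin n) (v : V),
    Function.Injective (fun x : Fin r × Fin 3 =>
      if x.2 = (0 : Fin 3) then a x.1 else if x.2 = (1 : Fin 3) then b x.1 else c x.1) ∧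
    v ≠ 0 ∧ ∀ s : Fin r,
      ga F (cyc3 (a s) (b s) (c s)) • v = algebraMap F (GA F n) zeta • v

/-- The `3`-rank `𝔯₃(V)` of an `F𝔖ₙ`-module `V` (with respect to a primitive cube root
of unity `zeta ∈ F`): the largest `r` such that there exist `r` disjoint 3-cycles
admitting a simultaneous `ζ`-eigenvector in `V`. -/
noncomputable def rank3 (F : Type) [Field F] (n : ℕ) (zeta : F) (V : Type*) [AddCommGroup V]
    [Module (GA F n) V] : ℕ :=
  sSup {r : ℕ | HasZetaSystem F n V zeta r}

/-- The rank `𝔯(D) = min(𝔯₂(D), 𝔯₂(D ⊗ sign))` of an (irreducible) module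
(case `char F ≠ 2`). -/
noncomputable def irrRank2 (F : Type) [Field F] (n : ℕ) (V : Type*) [AddCommGroup V]
    [Module (GA F n) V] : ℕ :=
  min (rank2 F n V) (rank2sign F n V)

/-- The rank `𝔯(V)` of an `F𝔖ₙ`-module `V` for `char F ≠ 2`: the maximum of
`𝔯(D) = min(𝔯₂(D), 𝔯₂(D ⊗ sign))` over the composition factors `D` of `V`
(realized as subquotients of `V`). -/
noncomputable def modRank2 (F : Type) [Field F] (n : ℕ) (V : Type*) [AddCommGroup V]
    [Module (GA F n) V] : ℕ :=
  sSup {r : ℕ | ∃ A B : Submodule (GA F n) V, A ≤ B ∧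
    IsSimpleModule (GA F n) (↥B ⧸ (A.comap B.subtype)) ∧
    r = irrRank2 F n (↥B ⧸ (A.comap B.subtype))}

/-- The rank `𝔯(V)` of an `F𝔖ₙ`-module `V` for `char F = 2`: the maximum of
`𝔯(D) = 𝔯₃(D)` over the composition factors `D` of `V` (realized as subquotients
of `V`); `zeta` is a primitive cube root of unity in `F`. -/
noncomputable def modRank3 (F : Type) [Field F] (n : ℕ) (zeta : F) (V : Type*)
    [AddCommGroup V] [Module (GA F n) V] : ℕ :=
  sSup {r : ℕ | ∃ A B : Submodule (GA F n) V, A ≤ B ∧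
    IsSimpleModule (GA F n) (↥B ⧸ (A.comap B.subtype)) ∧
    r = rank3 F n zeta (↥B ⧸ (A.comap B.subtype))}

section AuxGeneral
open Function

/-- Joint eigenvectors with pairwise distinct characters are linearly independent. -/
theorem indepEigen {F M ι J : Type*} [Field F] [AddCommGroup M] [Module F M]
    (T : J → Module.End F M) (χ : ι → J → F) (hχ : Function.Injective χ)
    (v : ι → M) (hv0 : ∀ i, v i ≠ 0) (hev : ∀ i j, T j (v i) = χ i j • v i) :
    LinearIndependent F v := by
  classical
  suffices H : ∀ s : Finset ι, ∀ g : ι → F, (∑ i ∈ s, g i • v i = 0) → ∀ i ∈ s, g i = 0 by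
    rw [linearIndependent_iff'']
    intro s g hg hsum i
    by_cases his : i ∈ s
    · exact H s g hsum i his
    · exact hg i his
  intro s
  induction s using Finset.strongInduction with
  | _ s ih =>
    intro g hsum i hi
    have hne : s.Nonempty := ⟨i, hi⟩
    obtain ⟨i₀, hi₀⟩ := hne
    -- all coefficients other than i₀ vanish
    have key : ∀ j ∈ s, j ≠ i₀ → g j = 0 := by
      intro j hj hji
      by_contra hgj
      have hall : ∀ jop : J, g j * (χ j jop - χ i₀ jop) = 0 := by
        intro jop
        have h1 : ∑ x ∈ s, (g x * χ x jop) • v x = 0 := by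
          have := congrArg (T jop) hsum
          rw [map_sum, map_zero] at this
          rw [← this]
          refine Finset.sum_congr rfl fun x _ => ?_
          rw [map_smul, hev, smul_smul]
        have h2 : ∑ x ∈ s, (g x * χ i₀ jop) • v x = 0 := by
          have := congrArg (fun z => χ i₀ jop • z) hsum
          simp only [Finset.smul_sum, smul_zero] at this
          rw [← this]
          refine Finset.sum_congr rfl fun x _ => ?_
          rw [smul_smul, mul_comm]
        have h3 : ∑ x ∈ s, (g x * (χ x jop - χ i₀ jop)) • v x = 0 := by
          have := sub_eq_zero.mpr (h1.trans h2.symm)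
          rw [← Finset.sum_sub_distrib] at this
          rw [← this]
          refine Finset.sum_congr rfl fun x _ => ?_
          rw [← sub_smul]; ring_nf
        have h4 : ∑ x ∈ s.erase i₀, (g x * (χ x jop - χ i₀ jop)) • v x = 0 := by
          rw [← Finset.add_sum_erase s _ hi₀] at h3
          simpa using h3
        exact ih (s.erase i₀) (Finset.erase_ssubset hi₀) _ h4 j (Finset.mem_erase.mpr ⟨hji, hj⟩)
      have : χ j = χ i₀ := by
        funext jop
        exact sub_eq_zero.mp ((mul_eq_zero.mp (hall jop)).resolve_left hgj)
      exact hji (hχ this)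
    -- now the sum reduces to the i₀ term
    have hsum' : g i₀ • v i₀ = 0 := by
      rw [← hsum]
      exact (Finset.sum_eq_single_of_mem (f := fun x => g x • v x) i₀ hi₀ (fun b hb hbne => by
        show g b • v b = 0
        rw [key b hb hbne, zero_smul])).symm
    have hgi₀ : g i₀ = 0 := by
      rcases smul_eq_zero.mp hsum' with h | h
      · exact h
      · exact absurd h (hv0 i₀)
    by_cases hii : i = i₀
    · rw [hii]; exact hgi₀
    · exact key i hi hii

/-- Any two injections between finite types of the same source can be intertwined by a
permutation of the target. -/
theorem exists_perm_eq {α β : Type*} [Fintype α] [Fintype β] [DecidableEq β]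
    (f g : α → β) (hf : Injective f) (hg : Injective g) :
    ∃ σ : Equiv.Perm β, ∀ a, σ (f a) = g a := by
  classical
  let ef : α ≃ Set.range f := Equiv.ofInjective f hf
  let eg : α ≃ Set.range g := Equiv.ofInjective g hg
  have hcard : Fintype.card (↥(Set.range f)ᶜ) = Fintype.card (↥(Set.range g)ᶜ) := by
    rw [Fintype.card_compl_set, Fintype.card_compl_set,
      Set.card_range_of_injective hf, Set.card_range_of_injective hg]
  let ec : (↥(Set.range f)ᶜ) ≃ (↥(Set.range g)ᶜ) := Fintype.equivOfCardEq hcard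
  refine ⟨(Equiv.Set.sumCompl (Set.range f)).symm.trans
    (((ef.symm.trans eg).sumCongr ec).trans (Equiv.Set.sumCompl (Set.range g))), fun a => ?_⟩
  have h1 : (Equiv.Set.sumCompl (Set.range f)).symm (f a) = Sum.inl ⟨f a, ⟨a, rfl⟩⟩ :=
    Equiv.Set.sumCompl_symm_apply_of_mem _
  simp only [Equiv.trans_apply, h1, Equiv.sumCongr_apply, Sum.map_inl]
  have h2 : ef.symm ⟨f a, ⟨a, rfl⟩⟩ = a := Equiv.ofInjective_symm_apply hf a
  rw [h2]
  exact Equiv.Set.sumCompl_apply_inl _ _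

theorem choose_le_choose_mid {m a b : ℕ} (hab : a ≤ b) (hbm : b ≤ m - a) (ham : a ≤ m) :
    m.choose a ≤ m.choose b := by
  have hbm' : b ≤ m := le_trans hbm (Nat.sub_le _ _)
  -- monotone up to m/2
  have mono : ∀ c d : ℕ, c ≤ d → d ≤ m / 2 → m.choose c ≤ m.choose d := by
    intro c d hcd hd
    induction d, hcd using Nat.le_induction with
    | base => exact le_refl _
    | succ k hk ih =>
      have hk2 : k < m / 2 := by omega
      exact le_trans (ih (by omega)) (Nat.choose_le_succ_of_lt_half_left hk2)
  rcases le_or_gt b (m - b) with h | h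
  · exact mono a b hab (by omega)
  · calc m.choose a ≤ m.choose (m - b) := mono a (m - b) (by omega) (by omega)
      _ = m.choose b := Nat.choose_symm hbm'
end AuxGeneral

section AuxExtend
open Function


variable {F M : Type*} [Field F] [AddCommGroup M] [Module F M]

/-- Extend a partial `(-1)`-eigenvector for commuting involutions to a joint eigenvector. -/
theorem extend2 {J : Type*} [Fintype J] [DecidableEq J] (T : J → Module.End F M)
    (hT2 : ∀ j w, T j (T j w) = w) (hcom : ∀ j k w, T j (T k w) = T k (T j w))
    (mu : F) (hmu : mu = 1 ∨ mu = -1)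
    (S : Finset J) (v : M) (hv : v ≠ 0) (hS : ∀ j ∈ S, T j v = mu • v) :
    ∃ (ε : J → F) (w : M), w ≠ 0 ∧ (∀ j ∈ S, ε j = mu) ∧ (∀ j, ε j = 1 ∨ ε j = -1) ∧
      ∀ j, T j w = ε j • w := by
  classical
  suffices H : ∀ s : Finset J, ∃ (ε : J → F) (w : M), w ≠ 0 ∧ (∀ j ∈ S, ε j = mu) ∧
      (∀ j, ε j = 1 ∨ ε j = -1) ∧ ∀ j, (j ∈ S ∨ j ∈ s) → T j w = ε j • w by
    obtain ⟨ε, w, h1, h2, h3, h4⟩ := H Finset.univ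
    exact ⟨ε, w, h1, h2, h3, fun j => h4 j (Or.inr (Finset.mem_univ j))⟩
  intro s
  induction s using Finset.induction with
  | empty =>
    refine ⟨fun _ => mu, v, hv, fun _ _ => rfl, fun _ => hmu, fun j hj => ?_⟩
    rcases hj with hj | hj
    · exact hS j hj
    · simp at hj
  | @insert j₀ s hj₀s ih =>
    obtain ⟨ε, w, hw0, hεS, hεpm, hev⟩ := ih
    by_cases hj₀ : j₀ ∈ S
    · refine ⟨ε, w, hw0, hεS, hεpm, fun j hj => ?_⟩
      rcases hj with hj | hj
      · exact hev j (Or.inl hj)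
      · rcases Finset.mem_insert.mp hj with rfl | hj
        · exact hev j (Or.inl hj₀)
        · exact hev j (Or.inr hj)
    · by_cases hz : w + T j₀ w = 0
      · -- T j₀ w = -w
        refine ⟨Function.update ε j₀ (-1), w, hw0, ?_, ?_, ?_⟩
        · intro j hj
          rw [Function.update_apply, if_neg (by rintro rfl; exact hj₀ hj)]
          exact hεS j hj
        · intro j
          rw [Function.update_apply]
          split
          · exact Or.inr rfl
          · exact hεpm j
        · intro j hj
          rcases eq_or_ne j j₀ with rfl | hne
          · rw [Function.update_self]
            have hTw : T j w = -w := by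
              have h' := hz
              rw [add_eq_zero_iff_neg_eq] at h'
              exact h'.symm
            rw [hTw, neg_smul, one_smul]
          · rw [Function.update_apply, if_neg hne]
            rcases hj with hj | hj
            · exact hev j (Or.inl hj)
            · rcases Finset.mem_insert.mp hj with rfl | hj
              · exact absurd rfl hne
              · exact hev j (Or.inr hj)
      · refine ⟨Function.update ε j₀ 1, w + T j₀ w, hz, ?_, ?_, ?_⟩
        · intro j hj
          rw [Function.update_apply, if_neg (by rintro rfl; exact hj₀ hj)]
          exact hεS j hj
        · intro j
          rw [Function.update_apply]
          split
          · exact Or.inl rfl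
          · exact hεpm j
        · intro j hj
          rcases eq_or_ne j j₀ with rfl | hne
          · rw [Function.update_self, one_smul, map_add, hT2, add_comm]
          · rw [Function.update_apply, if_neg hne]
            have hevj : T j w = ε j • w := by
              rcases hj with hj | hj
              · exact hev j (Or.inl hj)
              · rcases Finset.mem_insert.mp hj with rfl | hj
                · exact absurd rfl hne
                · exact hev j (Or.inr hj)
            rw [map_add, hevj, hcom j j₀, hevj, map_smul, smul_add]

open Function


variable {F M : Type*} [Field F] [AddCommGroup M] [Module F M]

theorem extend3 {J : Type*} [Fintype J] [DecidableEq J] (T : J → Module.End F M)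
    (hT3 : ∀ j w, T j (T j (T j w)) = w) (hcom : ∀ j k w, T j (T k w) = T k (T j w))
    (ζ : F) (hz3 : ζ ^ 3 = 1) (hsum : 1 + ζ + ζ ^ 2 = 0) (h3 : (3 : F) = 1)
    (S : Finset J) (v : M) (hv : v ≠ 0) (hS : ∀ j ∈ S, T j v = ζ • v) :
    ∃ (ε : J → F) (w : M), w ≠ 0 ∧ (∀ j ∈ S, ε j = ζ) ∧
      (∀ j, ε j = 1 ∨ ε j = ζ ∨ ε j = ζ ^ 2) ∧ ∀ j, T j w = ε j • w := by
  classical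
  suffices H : ∀ s : Finset J, ∃ (ε : J → F) (w : M), w ≠ 0 ∧ (∀ j ∈ S, ε j = ζ) ∧
      (∀ j, ε j = 1 ∨ ε j = ζ ∨ ε j = ζ ^ 2) ∧ ∀ j, (j ∈ S ∨ j ∈ s) → T j w = ε j • w by
    obtain ⟨ε, w, h1, h2, h3', h4⟩ := H Finset.univ
    exact ⟨ε, w, h1, h2, h3', fun j => h4 j (Or.inr (Finset.mem_univ j))⟩
  intro s
  induction s using Finset.induction with
  | empty =>
    refine ⟨fun _ => ζ, v, hv, fun _ _ => rfl, fun _ => Or.inr (Or.inl rfl), fun j hj => ?_⟩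
    rcases hj with hj | hj
    · exact hS j hj
    · simp at hj
  | @insert j₀ s hj₀s ih =>
    obtain ⟨ε, w, hw0, hεS, hεv, hev⟩ := ih
    by_cases hj₀ : j₀ ∈ S
    · refine ⟨ε, w, hw0, hεS, hεv, fun j hj => ?_⟩
      rcases hj with hj | hj
      · exact hev j (Or.inl hj)
      · rcases Finset.mem_insert.mp hj with rfl | hj
        · exact hev j (Or.inl hj₀)
        · exact hev j (Or.inr hj)
    · -- candidates for the three eigenvalues
      set y := T j₀ w with hy
      set z := T j₀ (T j₀ w) with hzdef
      have hTz : T j₀ z = w := hT3 j₀ w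
      -- u lam is a candidate eigenvector with eigenvalue lam
      have heig : ∀ lam : F, lam ^ 3 = 1 →
          T j₀ (w + lam ^ 2 • y + lam • z) = lam • (w + lam ^ 2 • y + lam • z) := by
        intro lam hlam
        have e : T j₀ (w + lam ^ 2 • y + lam • z) = y + lam ^ 2 • z + lam • w := by
          rw [map_add, map_add, map_smul, map_smul, hTz]
        have e' : lam • (w + lam ^ 2 • y + lam • z) = lam • w + y + lam ^ 2 • z := by
          rw [smul_add, smul_add, smul_smul, smul_smul,
            show lam * lam ^ 2 = lam ^ 3 by ring, hlam, one_smul, ← sq]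
        rw [e, e']
        abel
      have hsum3 : (w + (1:F) ^ 2 • y + (1:F) • z) + (w + ζ ^ 2 • y + ζ • z)
          + (w + (ζ ^ 2) ^ 2 • y + ζ ^ 2 • z) = w := by
        have e1 : ((1:F) ^ 2 + ζ ^ 2 + (ζ ^ 2) ^ 2 : F) = 0 := by
          have : (ζ ^ 2) ^ 2 = ζ := by
            rw [show (ζ ^ 2) ^ 2 = ζ ^ 3 * ζ by ring, hz3, one_mul]
          rw [this, one_pow]
          linear_combination hsum
        have e2 : ((1:F) + ζ + ζ ^ 2 : F) = 0 := hsum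
        have e3 : w + w + w = ((1:F) + 1 + 1) • w := by
          rw [add_smul, add_smul, one_smul]
        have e4 : ((1:F) + 1 + 1) = 1 := by rw [show (1:F)+1+1 = (3:F) by norm_num, h3]
        calc (w + (1:F) ^ 2 • y + (1:F) • z) + (w + ζ ^ 2 • y + ζ • z)
              + (w + (ζ ^ 2) ^ 2 • y + ζ ^ 2 • z)
            = (w + w + w) + ((1:F) ^ 2 + ζ ^ 2 + (ζ ^ 2) ^ 2) • y
              + ((1:F) + ζ + ζ ^ 2) • z := by
              rw [add_smul, add_smul, add_smul, add_smul]
              abel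
          _ = w := by rw [e1, e2, e3, e4, one_smul, zero_smul, zero_smul, add_zero, add_zero]
      -- pick a nonzero candidate
      have hex : ∃ lam : F, (lam = 1 ∨ lam = ζ ∨ lam = ζ ^ 2) ∧ lam ^ 3 = 1 ∧
          w + lam ^ 2 • y + lam • z ≠ 0 := by
        by_contra hcon
        push_neg at hcon
        have hz1 : (1:F) ^ 3 = 1 := one_pow 3
        have hz2 : (ζ ^ 2) ^ 3 = 1 := by rw [show (ζ^2)^3 = (ζ^3)^2 by ring, hz3, one_pow]
        have c1 := hcon 1 (Or.inl rfl) hz1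
        have c2 := hcon ζ (Or.inr (Or.inl rfl)) hz3
        have c3 := hcon (ζ ^ 2) (Or.inr (Or.inr rfl)) hz2
        rw [c1, c2, c3] at hsum3
        simp only [add_zero, zero_add] at hsum3
        exact hw0 hsum3.symm
      obtain ⟨lam, hlamv, hlam3, hlamne⟩ := hex
      refine ⟨Function.update ε j₀ lam, w + lam ^ 2 • y + lam • z, hlamne, ?_, ?_, ?_⟩
      · intro j hj
        rw [Function.update_apply, if_neg (by rintro rfl; exact hj₀ hj)]
        exact hεS j hj
      · intro j
        rw [Function.update_apply]
        split
        · exact hlamv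
        · exact hεv j
      · intro j hj
        rcases eq_or_ne j j₀ with rfl | hne
        · rw [Function.update_self]
          exact heig lam hlam3
        · rw [Function.update_apply, if_neg hne]
          have hevj : T j w = ε j • w := by
            rcases hj with hj | hj
            · exact hev j (Or.inl hj)
            · rcases Finset.mem_insert.mp hj with rfl | hj
              · exact absurd rfl hne
              · exact hev j (Or.inr hj)
          have hy' : T j y = ε j • y := by
            rw [hy, hcom j j₀, hevj, map_smul]
          have hz' : T j z = ε j • z := by
            rw [hzdef, hcom j j₀, hcom j j₀, hevj, map_smul, map_smul]
          rw [map_add, map_add, map_smul, map_smul, hevj, hy', hz',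
            smul_add, smul_add, smul_smul, smul_smul, smul_smul, smul_smul, mul_comm]
          rw [mul_comm lam (ε j)]

end AuxExtend

section AuxGA
open Function

variable {F : Type} [Field F] {n : ℕ} {M : Type*} [AddCommGroup M] [Module F M]
  [Module (GA F n) M] [IsScalarTower F (GA F n) M]

lemma ga_mul (σ τ : Equiv.Perm (Fin n)) : ga F (σ * τ) = ga F σ * ga F τ :=
  map_mul (MonoidAlgebra.of F (Equiv.Perm (Fin n))) σ τ

lemma ga_mul_smul (σ τ : Equiv.Perm (Fin n)) (v : M) :
    ga F (σ * τ) • v = ga F σ • ga F τ • v := by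
  rw [ga_mul, mul_smul]

lemma ga_one_smul (v : M) : ga F (1 : Equiv.Perm (Fin n)) • v = v := by
  show (MonoidAlgebra.of F (Equiv.Perm (Fin n))) 1 • v = v
  rw [map_one, one_smul]

lemma ga_smul_ne_zero (σ : Equiv.Perm (Fin n)) {v : M} (hv : v ≠ 0) : ga F σ • v ≠ 0 := by
  intro h
  apply hv
  have := congrArg (fun w => ga F σ⁻¹ • w) h
  simpa [← ga_mul_smul, ga_one_smul] using this

/-- conjugation formula for the action -/
lemma ga_smul_conj (σ ρ : Equiv.Perm (Fin n)) (v : M) :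
    ga F ρ • (ga F σ • v) = ga F σ • (ga F (σ⁻¹ * ρ * σ) • v) := by
  rw [← ga_mul_smul, ← ga_mul_smul]
  congr 1
  group

/-- The `F`-linear action of a permutation. -/
noncomputable def actE (σ : Equiv.Perm (Fin n)) : Module.End F M where
  toFun v := ga F σ • v
  map_add' x y := smul_add _ x y
  map_smul' c v := (smul_comm c (ga F σ) v).symm

@[simp] lemma actE_apply (σ : Equiv.Perm (Fin n)) (v : M) :
    (actE σ : Module.End F M) v = ga F σ • v := rfl

/-- point `j` of block `i` when `{1,…,n}` is divided into blocks of size `q` -/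
def pt {n : ℕ} (q : ℕ) (i : Fin (n / q)) (j : Fin q) : Fin n :=
  ⟨q * i + j, by
    have h1 : (i : ℕ) + 1 ≤ n / q := i.isLt
    have h2 : q * ((i : ℕ) + 1) ≤ q * (n / q) := Nat.mul_le_mul_left q h1
    have h3 : q * (n / q) ≤ n := by rw [mul_comm]; exact Nat.div_mul_le_self n q
    have h4 : (j : ℕ) < q := j.isLt
    have h5 : q * ((i : ℕ) + 1) = q * i + q := by ring
    omega⟩

lemma pt_inj {n q : ℕ} : Injective (fun x : Fin (n / q) × Fin q => pt q x.1 x.2) := by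
  rintro ⟨i, j⟩ ⟨i', j'⟩ h
  have hq : 0 < q := j.pos
  have h' : q * (i : ℕ) + j = q * i' + j' := congrArg Fin.val h
  have e1 : (q * (i : ℕ) + j) / q = i := by
    rw [Nat.mul_add_div hq, Nat.div_eq_of_lt j.isLt, add_zero]
  have e2 : (q * (i' : ℕ) + j') / q = i' := by
    rw [Nat.mul_add_div hq, Nat.div_eq_of_lt j'.isLt, add_zero]
  have e3 : (q * (i : ℕ) + j) % q = j := by
    rw [Nat.mul_add_mod, Nat.mod_eq_of_lt j.isLt]
  have e4 : (q * (i' : ℕ) + j') % q = j' := by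
    rw [Nat.mul_add_mod, Nat.mod_eq_of_lt j'.isLt]
  have hi : (i : ℕ) = i' := by rw [← e1, ← e2, h']
  have hj : (j : ℕ) = j' := by rw [← e3, ← e4, h']
  exact Prod.ext (Fin.ext hi) (Fin.ext hj)

lemma pt_inj' {n q : ℕ} {i i' : Fin (n / q)} {j j' : Fin q}
    (h : pt q i j = pt q i' j') : i = i' ∧ j = j' := by
  have := @pt_inj n q ⟨i, j⟩ ⟨i', j'⟩ h
  exact ⟨congrArg Prod.fst this, congrArg Prod.snd this⟩

section cyc
variable {α : Type*} [DecidableEq α]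

lemma cyc3_conj (σ : Equiv.Perm (Fin n)) (a b c : Fin n) :
    cyc3 (σ a) (σ b) (σ c) = σ * cyc3 a b c * σ⁻¹ := by
  unfold cyc3
  rw [Equiv.swap_apply_apply, Equiv.swap_apply_apply]
  group

lemma cyc3_apply_fst {a b c : Fin n} (hab : a ≠ b) (hac : a ≠ c) (_hbc : b ≠ c) :
    cyc3 a b c a = b := by
  unfold cyc3
  rw [Equiv.Perm.mul_apply, Equiv.swap_apply_of_ne_of_ne hab hac, Equiv.swap_apply_left]

lemma cyc3_apply_snd {a b c : Fin n} (hab : a ≠ b) (hac : a ≠ c) (hbc : b ≠ c) :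
    cyc3 a b c b = c := by
  unfold cyc3
  rw [Equiv.Perm.mul_apply, Equiv.swap_apply_left,
    Equiv.swap_apply_of_ne_of_ne hac.symm hbc.symm]

lemma cyc3_apply_thd {a b c : Fin n} (_hab : a ≠ b) (_hac : a ≠ c) (hbc : b ≠ c) :
    cyc3 a b c c = a := by
  unfold cyc3
  rw [Equiv.Perm.mul_apply, Equiv.swap_apply_right, Equiv.swap_apply_right]

lemma cyc3_apply_other {a b c x : Fin n} (hxa : x ≠ a) (hxb : x ≠ b) (hxc : x ≠ c) :
    cyc3 a b c x = x := by
  unfold cyc3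
  rw [Equiv.Perm.mul_apply, Equiv.swap_apply_of_ne_of_ne hxb hxc,
    Equiv.swap_apply_of_ne_of_ne hxa hxb]

lemma cyc3_sq {a b c : Fin n} (hab : a ≠ b) (hac : a ≠ c) (hbc : b ≠ c) :
    cyc3 a b c * cyc3 a b c = cyc3 a c b := by
  apply Equiv.ext
  intro x
  rw [Equiv.Perm.mul_apply]
  by_cases hxa : x = a
  · subst hxa
    rw [cyc3_apply_fst hab hac hbc, cyc3_apply_snd hab hac hbc,
      cyc3_apply_fst hac hab hbc.symm]
  by_cases hxb : x = b
  · subst hxb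
    rw [cyc3_apply_snd hab hac hbc, cyc3_apply_thd hab hac hbc,
      cyc3_apply_thd hac hab hbc.symm]
  by_cases hxc : x = c
  · subst hxc
    rw [cyc3_apply_thd hab hac hbc, cyc3_apply_fst hab hac hbc,
      cyc3_apply_snd hac hab hbc.symm]
  · rw [cyc3_apply_other hxa hxb hxc, cyc3_apply_other hxa hxb hxc,
      cyc3_apply_other hxa hxc hxb]

lemma cyc3_mul_rev {a b c : Fin n} (hab : a ≠ b) (hac : a ≠ c) (hbc : b ≠ c) :
    cyc3 a b c * cyc3 a c b = 1 := by
  apply Equiv.ext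
  intro x
  rw [Equiv.Perm.mul_apply, Equiv.Perm.one_apply]
  by_cases hxa : x = a
  · subst hxa
    rw [cyc3_apply_fst hac hab hbc.symm, cyc3_apply_thd hab hac hbc]
  by_cases hxb : x = b
  · subst hxb
    rw [cyc3_apply_thd hac hab hbc.symm, cyc3_apply_fst hab hac hbc]
  by_cases hxc : x = c
  · subst hxc
    rw [cyc3_apply_snd hac hab hbc.symm, cyc3_apply_snd hab hac hbc]
  · rw [cyc3_apply_other hxa hxc hxb, cyc3_apply_other hxa hxb hxc]

lemma cyc3_cube {a b c : Fin n} (hab : a ≠ b) (hac : a ≠ c) (hbc : b ≠ c) :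
    cyc3 a b c * (cyc3 a b c * cyc3 a b c) = 1 := by
  rw [cyc3_sq hab hac hbc, cyc3_mul_rev hab hac hbc]

lemma swap_commute {a b c d : Fin n} (hca : c ≠ a) (hcb : c ≠ b) (hda : d ≠ a) (hdb : d ≠ b) :
    Equiv.swap a b * Equiv.swap c d = Equiv.swap c d * Equiv.swap a b := by
  refine Equiv.Perm.Disjoint.commute (fun x => ?_)
  by_cases hxa : x = a
  · subst hxa; exact Or.inr (Equiv.swap_apply_of_ne_of_ne hca.symm hda.symm)
  by_cases hxb : x = b
  · subst hxb; exact Or.inr (Equiv.swap_apply_of_ne_of_ne hcb.symm hdb.symm)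
  · exact Or.inl (Equiv.swap_apply_of_ne_of_ne hxa hxb)

lemma cyc3_commute {a b c d e f : Fin n}
    (h : ∀ x, (x = a ∨ x = b ∨ x = c) → x ≠ d ∧ x ≠ e ∧ x ≠ f) :
    cyc3 a b c * cyc3 d e f = cyc3 d e f * cyc3 a b c := by
  refine Equiv.Perm.Disjoint.commute (fun x => ?_)
  by_cases hx : x = a ∨ x = b ∨ x = c
  · obtain ⟨h1, h2, h3⟩ := h x hx
    exact Or.inr (cyc3_apply_other h1 h2 h3)
  · push_neg at hx
    exact Or.inl (cyc3_apply_other hx.1 hx.2.1 hx.2.2)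

end cyc



end AuxGA

-- char ≠ 2 module-level bound; appended to base.lean for testing


open Function
open scoped Classical

noncomputable section

variable (F : Type) [Field F] (n : ℕ)

/-- the `i`-th standard transposition `(2i+1, 2i+2)` -/
def stdSwap (n : ℕ) (i : Fin (n / 2)) : Equiv.Perm (Fin n) :=
  Equiv.swap (pt 2 i 0) (pt 2 i 1)

variable (M : Type*) [AddCommGroup M] [Module F M] [Module (GA F n) M]
  [IsScalarTower F (GA F n) M]

/-- the character `i ↦ ±1` given by the `-1`-set `s` is realized by a joint eigenvector -/
def Real2 (s : Finset (Fin (n / 2))) : Prop :=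
  ∃ w : M, w ≠ 0 ∧ ∀ i, ga F (stdSwap n i) • w = (if i ∈ s then (-1 : F) else 1) • w

variable {F n M}

lemma pt_ne {q : ℕ} {i i' : Fin (n / q)} {j j' : Fin q} (h : j ≠ j') :
    pt q i j ≠ pt q i' j' := fun hc => h (pt_inj' hc).2

lemma pt_ne' {q : ℕ} {i i' : Fin (n / q)} {j j' : Fin q} (h : i ≠ i') :
    pt q i j ≠ pt q i' j' := fun hc => h (pt_inj' hc).1

lemma stdSwap_sq (i : Fin (n / 2)) (w : M) :
    ga F (stdSwap n i) • ga F (stdSwap n i) • w = w := by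
  rw [← ga_mul_smul]
  unfold stdSwap
  rw [Equiv.swap_mul_self, ga_one_smul]

lemma stdSwap_comm (i k : Fin (n / 2)) (w : M) :
    ga F (stdSwap n i) • ga F (stdSwap n k) • w = ga F (stdSwap n k) • ga F (stdSwap n i) • w := by
  rcases eq_or_ne i k with rfl | hik
  · rfl
  · rw [← ga_mul_smul, ← ga_mul_smul]
    have e : stdSwap n i * stdSwap n k = stdSwap n k * stdSwap n i := by
      unfold stdSwap
      exact swap_commute (pt_ne' hik.symm) (pt_ne' hik.symm) (pt_ne' hik.symm) (pt_ne' hik.symm)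
    rw [e]

/-- the endomorphism family -/
def T2 : Fin (n / 2) → Module.End F M := fun i => actE (stdSwap n i)

omit [Module F M] [IsScalarTower F (GA F n) M] in
lemma hasNeg_mono {r r' : ℕ} (h : HasNegSystem F n M r) (hle : r' ≤ r) :
    HasNegSystem F n M r' := by
  obtain ⟨a, b, v, hinj, hv, hneg⟩ := h
  refine ⟨a ∘ Fin.castLE hle, b ∘ Fin.castLE hle, v, ?_, hv, fun s => hneg _⟩
  intro x y hxy
  simp only [Function.comp] at hxy
  have : (fun x : Fin r × Bool => if x.2 then a x.1 else b x.1)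
      (Fin.castLE hle x.1, x.2) = (fun x : Fin r × Bool => if x.2 then a x.1 else b x.1)
      (Fin.castLE hle y.1, y.2) := by
    cases hx2 : x.2 <;> cases hy2 : y.2 <;> rw [hx2, hy2] at hxy <;> simpa using hxy
  obtain ⟨h3, h4⟩ := Prod.ext_iff.mp (hinj this)
  exact Prod.ext (Fin.castLE_injective hle h3) h4

omit [Module F M] [IsScalarTower F (GA F n) M] in
lemma hasPos_mono {r r' : ℕ} (h : HasPosSystem F n M r) (hle : r' ≤ r) :
    HasPosSystem F n M r' := by
  obtain ⟨a, b, v, hinj, hv, hneg⟩ := h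
  refine ⟨a ∘ Fin.castLE hle, b ∘ Fin.castLE hle, v, ?_, hv, fun s => hneg _⟩
  intro x y hxy
  simp only [Function.comp] at hxy
  have : (fun x : Fin r × Bool => if x.2 then a x.1 else b x.1)
      (Fin.castLE hle x.1, x.2) = (fun x : Fin r × Bool => if x.2 then a x.1 else b x.1)
      (Fin.castLE hle y.1, y.2) := by
    cases hx2 : x.2 <;> cases hy2 : y.2 <;> rw [hx2, hy2] at hxy <;> simpa using hxy
  obtain ⟨h3, h4⟩ := Prod.ext_iff.mp (hinj this)
  exact Prod.ext (Fin.castLE_injective hle h3) h4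

omit [Module F M] [IsScalarTower F (GA F n) M] in
lemma hasNeg_le {r : ℕ} (h : HasNegSystem F n M r) : r ≤ n / 2 := by
  obtain ⟨a, b, v, hinj, hv, hneg⟩ := h
  rw [Nat.le_div_iff_mul_le two_pos]
  have := Fintype.card_le_of_injective _ hinj
  simpa [mul_comm] using this

omit [Module F M] [IsScalarTower F (GA F n) M] in
lemma hasPos_le {r : ℕ} (h : HasPosSystem F n M r) : r ≤ n / 2 := by
  obtain ⟨a, b, v, hinj, hv, hneg⟩ := h
  rw [Nat.le_div_iff_mul_le two_pos]
  have := Fintype.card_le_of_injective _ hinj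
  simpa [mul_comm] using this

omit [Module F M] [IsScalarTower F (GA F n) M] in
lemma hasNeg_zero [Nontrivial M] : HasNegSystem F n M 0 := by
  obtain ⟨v, hv⟩ := exists_ne (0 : M)
  exact ⟨Fin.elim0, Fin.elim0, v, fun x => x.1.elim0, hv, fun s => s.elim0⟩

omit [Module F M] [IsScalarTower F (GA F n) M] in
lemma hasPos_zero [Nontrivial M] : HasPosSystem F n M 0 := by
  obtain ⟨v, hv⟩ := exists_ne (0 : M)
  exact ⟨Fin.elim0, Fin.elim0, v, fun x => x.1.elim0, hv, fun s => s.elim0⟩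

/-- conjugate an abstract system of transpositions into the standard position, and extend -/
lemma real2_of_neg {r : ℕ} (h : HasNegSystem F n M r) :
    ∃ s : Finset (Fin (n / 2)), r ≤ s.card ∧ Real2 F n M s := by
  classical
  have hrm : r ≤ n / 2 := hasNeg_le h
  obtain ⟨a, b, v, hinj, hv, hneg⟩ := h
  set g : Fin r × Bool → Fin n :=
    fun x => pt 2 (Fin.castLE hrm x.1) (if x.2 then 0 else 1) with hg
  have hginj : Injective g := by
    intro x y hxy
    obtain ⟨h1, h2⟩ := pt_inj' hxy
    refine Prod.ext (Fin.castLE_injective hrm h1) ?_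
    cases hx2 : x.2 <;> cases hy2 : y.2 <;> rw [hx2, hy2] at h2 <;> simp_all
  obtain ⟨σ, hσ⟩ := exists_perm_eq _ g hinj hginj
  have hσa : ∀ s : Fin r, σ (a s) = pt 2 (Fin.castLE hrm s) 0 := fun s => hσ (s, true)
  have hσb : ∀ s : Fin r, σ (b s) = pt 2 (Fin.castLE hrm s) 1 := fun s => hσ (s, false)
  set w : M := ga F σ • v with hwdef
  have hw : w ≠ 0 := ga_smul_ne_zero σ hv
  have hstd : ∀ s : Fin r, ga F (stdSwap n (Fin.castLE hrm s)) • w = (-1 : F) • w := by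
    intro s
    have e1 : stdSwap n (Fin.castLE hrm s) = σ * Equiv.swap (a s) (b s) * σ⁻¹ := by
      unfold stdSwap
      rw [← hσa, ← hσb, Equiv.swap_apply_apply]
    rw [e1, hwdef, ga_smul_conj]
    have e2 : σ⁻¹ * (σ * Equiv.swap (a s) (b s) * σ⁻¹) * σ = Equiv.swap (a s) (b s) := by group
    rw [e2, hneg s, neg_smul, one_smul, smul_neg]
  -- extend to a full joint eigenvector
  obtain ⟨ε, w', hw'0, hεS, hεpm, hev⟩ := extend2 (M := M) (T2 (F := F) (n := n) (M := M))
    (fun j x => stdSwap_sq j x) (fun j k x => stdSwap_comm j k x) (-1) (Or.inr rfl)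
    (Finset.univ.map (Fin.castLEEmb hrm)) w hw (by
      intro j hj
      obtain ⟨s, _, rfl⟩ := Finset.mem_map.mp hj
      exact hstd s)
  refine ⟨Finset.univ.filter (fun i => ε i = -1), ?_, w', hw'0, ?_⟩
  · calc r = (Finset.univ.map (Fin.castLEEmb hrm)).card := by
          rw [Finset.card_map, Finset.card_univ, Fintype.card_fin]
      _ ≤ _ := Finset.card_le_card (fun j hj => Finset.mem_filter.mpr
          ⟨Finset.mem_univ j, hεS j hj⟩)
  · intro i
    have hevi : ga F (stdSwap n i) • w' = ε i • w' := hev i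
    by_cases hi : ε i = -1
    · rw [if_pos (Finset.mem_filter.mpr ⟨Finset.mem_univ i, hi⟩), ← hi]; exact hevi
    · have hnm : i ∉ Finset.filter (fun i => ε i = -1) Finset.univ :=
        fun hc => hi (Finset.mem_filter.mp hc).2
      rw [if_neg hnm]
      have h1 : ε i = 1 := (hεpm i).resolve_right hi
      rw [← h1]; exact hevi

lemma real2_of_pos (hpm : (-1 : F) ≠ 1) {r : ℕ} (h : HasPosSystem F n M r) :
    ∃ s : Finset (Fin (n / 2)), s.card ≤ n / 2 - r ∧ Real2 F n M s := by
  classical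
  have hrm : r ≤ n / 2 := hasPos_le h
  obtain ⟨a, b, v, hinj, hv, hpos⟩ := h
  set g : Fin r × Bool → Fin n :=
    fun x => pt 2 (Fin.castLE hrm x.1) (if x.2 then 0 else 1) with hg
  have hginj : Injective g := by
    intro x y hxy
    obtain ⟨h1, h2⟩ := pt_inj' hxy
    refine Prod.ext (Fin.castLE_injective hrm h1) ?_
    cases hx2 : x.2 <;> cases hy2 : y.2 <;> rw [hx2, hy2] at h2 <;> simp_all
  obtain ⟨σ, hσ⟩ := exists_perm_eq _ g hinj hginj
  have hσa : ∀ s : Fin r, σ (a s) = pt 2 (Fin.castLE hrm s) 0 := fun s => hσ (s, true)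
  have hσb : ∀ s : Fin r, σ (b s) = pt 2 (Fin.castLE hrm s) 1 := fun s => hσ (s, false)
  set w : M := ga F σ • v with hwdef
  have hw : w ≠ 0 := ga_smul_ne_zero σ hv
  have hstd : ∀ s : Fin r, ga F (stdSwap n (Fin.castLE hrm s)) • w = (1 : F) • w := by
    intro s
    have e1 : stdSwap n (Fin.castLE hrm s) = σ * Equiv.swap (a s) (b s) * σ⁻¹ := by
      unfold stdSwap
      rw [← hσa, ← hσb, Equiv.swap_apply_apply]
    rw [e1, hwdef, ga_smul_conj]
    have e2 : σ⁻¹ * (σ * Equiv.swap (a s) (b s) * σ⁻¹) * σ = Equiv.swap (a s) (b s) := by group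
    rw [e2, hpos s, one_smul]
  obtain ⟨ε, w', hw'0, hεS, hεpm, hev⟩ := extend2 (M := M) (T2 (F := F) (n := n) (M := M))
    (fun j x => stdSwap_sq j x) (fun j k x => stdSwap_comm j k x) 1 (Or.inl rfl)
    (Finset.univ.map (Fin.castLEEmb hrm)) w hw (by
      intro j hj
      obtain ⟨s, _, rfl⟩ := Finset.mem_map.mp hj
      exact hstd s)
  refine ⟨Finset.univ.filter (fun i => ε i = -1), ?_, w', hw'0, ?_⟩
  · have hsub : Finset.univ.filter (fun i => ε i = -1) ⊆
        Finset.univ \ Finset.univ.map (Fin.castLEEmb hrm) := by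
      intro i hi
      rw [Finset.mem_sdiff]
      refine ⟨Finset.mem_univ i, fun hc => ?_⟩
      have h1 := hεS i hc
      have h2 := (Finset.mem_filter.mp hi).2
      rw [h1] at h2
      exact hpm h2.symm
    calc (Finset.univ.filter (fun i => ε i = -1)).card
        ≤ (Finset.univ \ Finset.univ.map (Fin.castLEEmb hrm)).card := Finset.card_le_card hsub
      _ = n / 2 - r := by
          rw [Finset.card_sdiff_of_subset (Finset.subset_univ _), Finset.card_univ, Fintype.card_fin,
            Finset.card_map, Finset.card_univ, Fintype.card_fin]
  · intro i
    have hevi : ga F (stdSwap n i) • w' = ε i • w' := hev i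
    by_cases hi : ε i = -1
    · rw [if_pos (Finset.mem_filter.mpr ⟨Finset.mem_univ i, hi⟩), ← hi]; exact hevi
    · have hnm : i ∉ Finset.filter (fun i => ε i = -1) Finset.univ :=
        fun hc => hi (Finset.mem_filter.mp hc).2
      rw [if_neg hnm]
      have h1 : ε i = 1 := (hεpm i).resolve_right hi
      rw [← h1]; exact hevi

end






open Function
open scoped Classical

noncomputable section

variable {F : Type} [Field F] {n : ℕ} {M : Type*} [AddCommGroup M] [Module F M]
  [Module (GA F n) M] [IsScalarTower F (GA F n) M]

/-- realized characters only depend on the cardinality of the `-1`-set -/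
lemma real2_perm {s s' : Finset (Fin (n / 2))} (h : Real2 F n M s) (hc : s.card = s'.card) :
    Real2 F n M s' := by
  obtain ⟨w, hw0, hev⟩ := h
  have hcards : Fintype.card ↥s = Fintype.card ↥s' := by
    rw [Fintype.card_coe, Fintype.card_coe, hc]
  set e : ↥s ≃ ↥s' := Fintype.equivOfCardEq hcards with he
  obtain ⟨τ, hτ⟩ := exists_perm_eq (fun x : ↥s => (x : Fin (n / 2)))
    (fun x : ↥s => ((e x : ↥s') : Fin (n / 2))) Subtype.val_injective
    (Subtype.val_injective.comp e.injective)
  have hmem : ∀ i, i ∈ s ↔ τ i ∈ s' := by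
    intro i
    constructor
    · intro hi
      have := hτ ⟨i, hi⟩
      rw [this]
      exact (e ⟨i, hi⟩).2
    · intro hi
      have hx : ∃ x : ↥s, ((e x : ↥s') : Fin (n / 2)) = τ i := by
        refine ⟨e.symm ⟨τ i, hi⟩, ?_⟩
        rw [Equiv.apply_symm_apply]
      obtain ⟨x, hx⟩ := hx
      have h2 : τ (x : Fin (n / 2)) = τ i := by rw [hτ x, hx]
      have h3 : (x : Fin (n / 2)) = i := τ.injective h2
      rw [← h3]
      exact x.2
  obtain ⟨σ, hσ⟩ := exists_perm_eq (fun x : Fin (n / 2) × Fin 2 => pt 2 x.1 x.2)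
    (fun x : Fin (n / 2) × Fin 2 => pt 2 (τ x.1) x.2) pt_inj
    (by
      intro x y hxy
      obtain ⟨h1, h2⟩ := pt_inj' hxy
      exact Prod.ext (τ.injective h1) h2)
  refine ⟨ga F σ • w, ga_smul_ne_zero σ hw0, fun i => ?_⟩
  have e1 : stdSwap n i = σ * stdSwap n (τ⁻¹ i) * σ⁻¹ := by
    unfold stdSwap
    have p0 : pt 2 i 0 = σ (pt 2 (τ⁻¹ i) 0) := by
      rw [hσ (τ⁻¹ i, 0)]
      congr 1
      exact (Equiv.apply_symm_apply τ i).symm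
    have p1 : pt 2 i 1 = σ (pt 2 (τ⁻¹ i) 1) := by
      rw [hσ (τ⁻¹ i, 1)]
      congr 1
      exact (Equiv.apply_symm_apply τ i).symm
    rw [p0, p1, Equiv.swap_apply_apply]
  rw [e1, ga_smul_conj]
  have e2 : σ⁻¹ * (σ * stdSwap n (τ⁻¹ i) * σ⁻¹) * σ = stdSwap n (τ⁻¹ i) := by group
  rw [e2, hev (τ⁻¹ i)]
  have e3 : τ⁻¹ i ∈ s ↔ i ∈ s' := by
    have h' := hmem (τ⁻¹ i)
    rw [show τ (τ⁻¹ i) = i from Equiv.apply_symm_apply τ i] at h'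
    exact h'
  have e4 : (if τ⁻¹ i ∈ s then (-1 : F) else 1) = (if i ∈ s' then (-1 : F) else 1) :=
    if_congr e3 rfl rfl
  rw [e4]
  exact smul_comm _ _ _

lemma pt_pair_inj {k q : ℕ} (idx : Fin k → Fin (n / q)) (hidx : Injective idx)
    (jj : Bool → Fin q) (hjj : Injective jj) :
    Injective (fun x : Fin k × Bool => pt q (idx x.1) (jj x.2)) := by
  rintro ⟨x1, x2⟩ ⟨y1, y2⟩ h
  obtain ⟨h1, h2⟩ := pt_inj' h
  exact Prod.ext (hidx h1) (hjj h2)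

/-- a realized character yields systems of disjoint transpositions -/
lemma real2_neg {s : Finset (Fin (n / 2))} (h : Real2 F n M s) :
    HasNegSystem F n M s.card := by
  obtain ⟨w, hw0, hev⟩ := h
  set en := s.equivFin with hen
  refine ⟨fun x => pt 2 (en.symm x : Fin (n / 2)) 0, fun x => pt 2 (en.symm x : Fin (n / 2)) 1,
    w, ?_, hw0, ?_⟩
  · have heq : (fun x : Fin s.card × Bool => if x.2 then pt 2 (en.symm x.1 : Fin (n / 2)) 0
        else pt 2 (en.symm x.1 : Fin (n / 2)) 1)
        = fun x : Fin s.card × Bool => pt 2 ((fun u => (en.symm u : Fin (n / 2))) x.1)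
          ((fun b : Bool => if b then (0 : Fin 2) else 1) x.2) := by
      funext x
      rcases x with ⟨x1, x2⟩
      cases x2 <;> rfl
    rw [heq]
    exact pt_pair_inj (fun u => (en.symm u : Fin (n / 2)))
      (Subtype.val_injective.comp en.symm.injective)
      (fun b : Bool => if b then (0 : Fin 2) else 1) (by decide)
  · intro x
    have : Equiv.swap (pt 2 (en.symm x : Fin (n / 2)) 0) (pt 2 (en.symm x : Fin (n / 2)) 1)
        = stdSwap n (en.symm x : Fin (n / 2)) := rfl
    rw [this, hev, if_pos (en.symm x).2, neg_smul, one_smul]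

lemma real2_pos {s : Finset (Fin (n / 2))} (h : Real2 F n M s) :
    HasPosSystem F n M (n / 2 - s.card) := by
  obtain ⟨w, hw0, hev⟩ := h
  have hcard : (sᶜ : Finset (Fin (n / 2))).card = n / 2 - s.card := by
    rw [Finset.card_compl, Fintype.card_fin]
  set en := (sᶜ : Finset (Fin (n / 2))).equivFin with hen
  set en' : Fin (n / 2 - s.card) ≃ ↥(sᶜ : Finset (Fin (n / 2))) :=
    (en.trans (finCongr hcard)).symm with hen'
  refine ⟨fun x => pt 2 (en' x : Fin (n / 2)) 0, fun x => pt 2 (en' x : Fin (n / 2)) 1,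
    w, ?_, hw0, ?_⟩
  · have heq : (fun x : Fin (n / 2 - s.card) × Bool => if x.2 then pt 2 (en' x.1 : Fin (n / 2)) 0
        else pt 2 (en' x.1 : Fin (n / 2)) 1)
        = fun x : Fin (n / 2 - s.card) × Bool => pt 2 ((fun u => (en' u : Fin (n / 2))) x.1)
          ((fun b : Bool => if b then (0 : Fin 2) else 1) x.2) := by
      funext x
      rcases x with ⟨x1, x2⟩
      cases x2 <;> rfl
    rw [heq]
    exact pt_pair_inj (fun u => (en' u : Fin (n / 2)))
      (Subtype.val_injective.comp en'.injective)
      (fun b : Bool => if b then (0 : Fin 2) else 1) (by decide)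
  · intro x
    have e0 : Equiv.swap (pt 2 (en' x : Fin (n / 2)) 0) (pt 2 (en' x : Fin (n / 2)) 1)
        = stdSwap n (en' x : Fin (n / 2)) := rfl
    have e1 : (en' x : Fin (n / 2)) ∉ s := Finset.mem_compl.mp (en' x).2
    rw [e0, hev, if_neg e1, one_smul]

/-- if every character of weight `k` is realized then `dim ≥ choose (n/2) k` -/
lemma real2_dim [FiniteDimensional F M] (hpm : (-1 : F) ≠ 1) (k : ℕ)
    (hall : ∀ s : Finset (Fin (n / 2)), s.card = k → Real2 F n M s) :
    (n / 2).choose k ≤ Module.finrank F M := by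
  have hch : ∀ t : {s : Finset (Fin (n / 2)) // s.card = k}, Real2 F n M t.1 :=
    fun t => hall t.1 t.2
  choose w hw0 hev using hch
  set χ : {s : Finset (Fin (n / 2)) // s.card = k} → (Fin (n / 2) → F) :=
    fun t i => if i ∈ t.1 then -1 else 1 with hχdef
  have hχ : Injective χ := by
    intro t t' h
    apply Subtype.ext
    ext i
    have := congrFun h i
    simp only [hχdef] at this
    constructor
    · intro hi
      by_contra hi'
      rw [if_pos hi, if_neg hi'] at this
      exact hpm this
    · intro hi
      by_contra hi'
      rw [if_neg hi', if_pos hi] at this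
      exact hpm this.symm
  have hind := indepEigen (T2 (F := F) (n := n) (M := M)) χ hχ w hw0 (by
    intro t i
    show ga F (stdSwap n i) • w t = χ t i • w t
    exact hev t i)
  calc (n / 2).choose k = Fintype.card {s : Finset (Fin (n / 2)) // s.card = k} := by
        rw [Fintype.card_finset_len, Fintype.card_fin]
    _ ≤ Module.finrank F M := hind.fintype_card_le_finrank

/-- main bound for `char F ≠ 2`, module level -/
theorem bound2 [FiniteDimensional F M] [Nontrivial M] (hpm : (-1 : F) ≠ 1) :
    (n / 2).choose (irrRank2 F n M) ≤ Module.finrank F M := by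
  set m := n / 2 with hm
  set r := irrRank2 F n M with hr
  have hbddneg : BddAbove {r : ℕ | HasNegSystem F n M r} :=
    ⟨m, fun x hx => hasNeg_le hx⟩
  have hbddpos : BddAbove {r : ℕ | HasPosSystem F n M r} :=
    ⟨m, fun x hx => hasPos_le hx⟩
  have hneg_rank : HasNegSystem F n M (rank2 F n M) :=
    Nat.sSup_mem (s := {r : ℕ | HasNegSystem F n M r})
      ⟨0, show HasNegSystem F n M 0 from hasNeg_zero⟩ hbddneg
  have hpos_rank : HasPosSystem F n M (rank2sign F n M) :=
    Nat.sSup_mem (s := {r : ℕ | HasPosSystem F n M r})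
      ⟨0, show HasPosSystem F n M 0 from hasPos_zero⟩ hbddpos
  have hr1 : r ≤ rank2 F n M := min_le_left _ _
  have hr2 : r ≤ rank2sign F n M := min_le_right _ _
  have hrm : r ≤ m := le_trans hr1 (hasNeg_le hneg_rank)
  obtain ⟨s₁, hs₁r, hs₁⟩ := real2_of_neg (hasNeg_mono hneg_rank hr1)
  obtain ⟨s₂, hs₂r, hs₂⟩ := real2_of_pos hpm (hasPos_mono hpos_rank hr2)
  obtain ⟨ρ, hρ⟩ : ∃ ρ, ρ = min r (m - r) := ⟨_, rfl⟩
  have hρm : ρ ≤ m := by omega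
  have hchooseρ : m.choose r = m.choose ρ := by
    rcases min_choice r (m - r) with h | h
    · rw [hρ, h]
    · rw [hρ, h]
      exact (Nat.choose_symm hrm).symm
  have key : ∀ k : ℕ, ρ ≤ k → k ≤ m - ρ → (∃ s : Finset (Fin m), s.card = k ∧ Real2 F n M s) →
      m.choose r ≤ Module.finrank F M := by
    intro k h1 h2 ⟨s, hs, hreal⟩
    have : m.choose r ≤ m.choose k := by
      rw [hchooseρ]
      exact choose_le_choose_mid h1 h2 hρm
    exact le_trans this (real2_dim hpm k (fun s' hs' => real2_perm hreal (by rw [hs, hs'])))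
  by_cases hc1 : s₁.card ≤ m - ρ
  · exact key s₁.card (by omega) hc1 ⟨s₁, rfl, hs₁⟩
  · by_cases hc2 : ρ ≤ s₂.card
    · exact key s₂.card hc2 (by omega) ⟨s₂, rfl, hs₂⟩
    · exfalso
      push_neg at hc1 hc2
      have h1 : s₁.card ≤ rank2 F n M := le_csSup hbddneg (real2_neg hs₁)
      have h2 : m - s₂.card ≤ rank2sign F n M := le_csSup hbddpos (real2_pos hs₂)
      have h3 : s₂.card ≤ m := by simpa using Finset.card_le_univ s₂
      have h4 : r = min (rank2 F n M) (rank2sign F n M) := hr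
      omega

end






open Function
open scoped Classical

noncomputable section

variable {F : Type} [Field F] {n : ℕ} {M : Type*} [AddCommGroup M] [Module F M]
  [Module (GA F n) M] [IsScalarTower F (GA F n) M]

/-- the `i`-th standard 3-cycle `(3i+1, 3i+2, 3i+3)` -/
def stdCyc (n : ℕ) (i : Fin (n / 3)) : Equiv.Perm (Fin n) :=
  cyc3 (pt 3 i 0) (pt 3 i 1) (pt 3 i 2)

/-- the eigenvalue associated to a `Fin 3` label -/
def val3 (zeta : F) (j : Fin 3) : F := if j = 0 then 1 else if j = 1 then zeta else zeta ^ 2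

/-- the character given by `c` is realized by a joint eigenvector -/
def Real3 (F : Type) [Field F] (n : ℕ) (M : Type*) [AddCommGroup M] [Module F M]
    [Module (GA F n) M] [IsScalarTower F (GA F n) M]
    (zeta : F) (c : Fin (n / 3) → Fin 3) : Prop :=
  ∃ w : M, w ≠ 0 ∧ ∀ i, ga F (stdCyc n i) • w = val3 zeta (c i) • w

lemma stdCyc_pts_ne₁ (i : Fin (n / 3)) : pt 3 i 0 ≠ pt 3 i 1 := pt_ne (by decide)
lemma stdCyc_pts_ne₂ (i : Fin (n / 3)) : pt 3 i 0 ≠ pt 3 i 2 := pt_ne (by decide)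
lemma stdCyc_pts_ne₃ (i : Fin (n / 3)) : pt 3 i 1 ≠ pt 3 i 2 := pt_ne (by decide)

lemma stdCyc_cube (i : Fin (n / 3)) (w : M) :
    ga F (stdCyc n i) • ga F (stdCyc n i) • ga F (stdCyc n i) • w = w := by
  rw [← ga_mul_smul, ← ga_mul_smul]
  have e : stdCyc n i * stdCyc n i * stdCyc n i = 1 := by
    rw [mul_assoc]
    exact cyc3_cube (stdCyc_pts_ne₁ i) (stdCyc_pts_ne₂ i) (stdCyc_pts_ne₃ i)
  rw [e, ga_one_smul]

lemma stdCyc_comm (i k : Fin (n / 3)) (w : M) :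
    ga F (stdCyc n i) • ga F (stdCyc n k) • w = ga F (stdCyc n k) • ga F (stdCyc n i) • w := by
  rcases eq_or_ne i k with rfl | hik
  · rfl
  · rw [← ga_mul_smul, ← ga_mul_smul]
    have e : stdCyc n i * stdCyc n k = stdCyc n k * stdCyc n i := by
      refine cyc3_commute ?_
      rintro x (rfl | rfl | rfl) <;>
        exact ⟨pt_ne' hik, pt_ne' hik, pt_ne' hik⟩
    rw [e]

def T3 : Fin (n / 3) → Module.End F M := fun i => actE (stdCyc n i)

lemma pt_triple_inj {k : ℕ} (idx : Fin k → Fin (n / 3)) (hidx : Injective idx)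
    (π : Fin k → Fin 3 → Fin 3) (hπ : ∀ x, Injective (π x)) :
    Injective (fun x : Fin k × Fin 3 => pt 3 (idx x.1) (π x.1 x.2)) := by
  rintro ⟨x1, x2⟩ ⟨y1, y2⟩ h
  obtain ⟨h1, h2⟩ := pt_inj' h
  have e : x1 = y1 := hidx h1
  subst e
  exact Prod.ext rfl (hπ x1 h2)

omit [Module F M] [IsScalarTower F (GA F n) M] in
lemma hasZeta_le {zeta : F} {r : ℕ} (h : HasZetaSystem F n M zeta r) : r ≤ n / 3 := by
  obtain ⟨a, b, c, v, hinj, hv, hev⟩ := h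
  rw [Nat.le_div_iff_mul_le three_pos]
  have := Fintype.card_le_of_injective _ hinj
  simpa [mul_comm] using this

omit [Module F M] [IsScalarTower F (GA F n) M] in
lemma hasZeta_zero {zeta : F} [Nontrivial M] : HasZetaSystem F n M zeta 0 := by
  obtain ⟨v, hv⟩ := exists_ne (0 : M)
  exact ⟨Fin.elim0, Fin.elim0, Fin.elim0, v, fun x => x.1.elim0, hv, fun s => s.elim0⟩

omit [Module F M] [IsScalarTower F (GA F n) M] in
lemma hasZeta_mono {zeta : F} {r r' : ℕ} (h : HasZetaSystem F n M zeta r) (hle : r' ≤ r) :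
    HasZetaSystem F n M zeta r' := by
  obtain ⟨a, b, c, v, hinj, hv, hev⟩ := h
  refine ⟨a ∘ Fin.castLE hle, b ∘ Fin.castLE hle, c ∘ Fin.castLE hle, v, ?_, hv, fun s => hev _⟩
  have heq : (fun x : Fin r' × Fin 3 => if x.2 = (0 : Fin 3) then (a ∘ Fin.castLE hle) x.1
      else if x.2 = (1 : Fin 3) then (b ∘ Fin.castLE hle) x.1 else (c ∘ Fin.castLE hle) x.1)
      = (fun x : Fin r × Fin 3 => if x.2 = (0 : Fin 3) then a x.1
        else if x.2 = (1 : Fin 3) then b x.1 else c x.1) ∘ Prod.map (Fin.castLE hle) id := by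
    funext x
    rcases x with ⟨x1, x2⟩
    fin_cases x2 <;> rfl
  rw [heq]
  exact hinj.comp ((Fin.castLE_injective hle).prodMap injective_id)

end






open Function
open scoped Classical

noncomputable section

variable {F : Type} [Field F] {n : ℕ} {M : Type*} [AddCommGroup M] [Module F M]
  [Module (GA F n) M] [IsScalarTower F (GA F n) M]

lemma fin3_cases (j : Fin 3) : j = 0 ∨ j = 1 ∨ j = 2 := by omega

lemma real3_of_zeta {zeta : F} (hz1 : zeta ≠ 1) (hz3 : zeta ^ 3 = 1)
    (hsum : 1 + zeta + zeta ^ 2 = 0) (h3 : (3 : F) = 1)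
    {r : ℕ} (h : HasZetaSystem F n M zeta r) :
    ∃ c : Fin (n / 3) → Fin 3, r ≤ (Finset.univ.filter (fun i => c i ≠ 0)).card ∧
      Real3 F n M zeta c := by
  classical
  have hrm : r ≤ n / 3 := hasZeta_le h
  obtain ⟨a, b, c, v, hinj, hv, hev⟩ := h
  set g : Fin r × Fin 3 → Fin n := fun x => pt 3 (Fin.castLE hrm x.1) x.2 with hg
  have hginj : Injective g := by
    intro x y hxy
    obtain ⟨h1, h2⟩ := pt_inj' hxy
    exact Prod.ext (Fin.castLE_injective hrm h1) h2
  obtain ⟨σ, hσ⟩ := exists_perm_eq _ g hinj hginj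
  have hσa : ∀ s : Fin r, σ (a s) = pt 3 (Fin.castLE hrm s) 0 := fun s => hσ (s, 0)
  have hσb : ∀ s : Fin r, σ (b s) = pt 3 (Fin.castLE hrm s) 1 := fun s => hσ (s, 1)
  have hσc : ∀ s : Fin r, σ (c s) = pt 3 (Fin.castLE hrm s) 2 := fun s => hσ (s, 2)
  set w : M := ga F σ • v with hwdef
  have hw : w ≠ 0 := ga_smul_ne_zero σ hv
  have hev' : ∀ s : Fin r, ga F (cyc3 (a s) (b s) (c s)) • v = zeta • v := by
    intro s
    have h' := hev s
    rwa [algebraMap_smul] at h'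
  have hstd : ∀ s : Fin r, ga F (stdCyc n (Fin.castLE hrm s)) • w = zeta • w := by
    intro s
    have e1 : stdCyc n (Fin.castLE hrm s) = σ * cyc3 (a s) (b s) (c s) * σ⁻¹ := by
      unfold stdCyc
      rw [← hσa, ← hσb, ← hσc, cyc3_conj]
    rw [e1, hwdef, ga_smul_conj]
    have e2 : σ⁻¹ * (σ * cyc3 (a s) (b s) (c s) * σ⁻¹) * σ = cyc3 (a s) (b s) (c s) := by group
    rw [e2, hev' s]
    exact smul_comm _ _ _
  obtain ⟨ε, w', hw'0, hεS, hεv, hevw⟩ := extend3 (M := M) (T3 (F := F) (n := n) (M := M))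
    (fun j x => stdCyc_cube j x) (fun j k x => stdCyc_comm j k x) zeta hz3 hsum h3
    (Finset.univ.map (Fin.castLEEmb hrm)) w hw (by
      intro j hj
      obtain ⟨s, _, rfl⟩ := Finset.mem_map.mp hj
      exact hstd s)
  set cc : Fin (n / 3) → Fin 3 := fun i => if ε i = 1 then 0 else if ε i = zeta then 1 else 2
    with hcc
  have hval : ∀ i, val3 zeta (cc i) = ε i := by
    intro i
    simp only [hcc]
    by_cases h1 : ε i = 1
    · rw [if_pos h1]; exact h1.symm
    · rw [if_neg h1]
      by_cases h2 : ε i = zeta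
      · rw [if_pos h2]; exact h2.symm
      · rw [if_neg h2]
        have h4 : ε i = zeta ^ 2 := by
          rcases hεv i with h' | h' | h'
          · exact absurd h' h1
          · exact absurd h' h2
          · exact h'
        exact h4.symm
  refine ⟨cc, ?_, w', hw'0, ?_⟩
  · have hsub : Finset.univ.map (Fin.castLEEmb hrm) ⊆
        Finset.univ.filter (fun i => cc i ≠ 0) := by
      intro j hj
      refine Finset.mem_filter.mpr ⟨Finset.mem_univ j, ?_⟩
      have h1 : ε j = zeta := hεS j hj
      simp only [hcc]
      rw [h1, if_neg hz1, if_pos rfl]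
      decide
    calc r = (Finset.univ.map (Fin.castLEEmb hrm)).card := by
          rw [Finset.card_map, Finset.card_univ, Fintype.card_fin]
      _ ≤ _ := Finset.card_le_card hsub
  · intro i
    rw [hval i]
    exact hevw i

lemma real3_perm {zeta : F} {c c' : Fin (n / 3) → Fin 3}
    (hz3 : zeta ^ 3 = 1) (h : Real3 F n M zeta c)
    (hc : (Finset.univ.filter (fun i => c i ≠ 0)).card
        = (Finset.univ.filter (fun i => c' i ≠ 0)).card) :
    Real3 F n M zeta c' := by
  classical
  obtain ⟨w, hw0, hev⟩ := h
  set s := Finset.univ.filter (fun i => c i ≠ 0) with hs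
  set s' := Finset.univ.filter (fun i => c' i ≠ 0) with hs'
  have hcards : Fintype.card ↥s = Fintype.card ↥s' := by
    rw [Fintype.card_coe, Fintype.card_coe, hc]
  set e : ↥s ≃ ↥s' := Fintype.equivOfCardEq hcards with he
  obtain ⟨τ, hτ⟩ := exists_perm_eq (fun x : ↥s => (x : Fin (n / 3)))
    (fun x : ↥s => ((e x : ↥s') : Fin (n / 3))) Subtype.val_injective
    (Subtype.val_injective.comp e.injective)
  have hmem : ∀ i, i ∈ s ↔ τ i ∈ s' := by
    intro i
    constructor
    · intro hi
      have h' := hτ ⟨i, hi⟩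
      rw [h']
      exact (e ⟨i, hi⟩).2
    · intro hi
      obtain ⟨x, hx⟩ : ∃ x : ↥s, ((e x : ↥s') : Fin (n / 3)) = τ i :=
        ⟨e.symm ⟨τ i, hi⟩, by rw [Equiv.apply_symm_apply]⟩
      have h2 : τ (x : Fin (n / 3)) = τ i := by rw [hτ x, hx]
      have h3 : (x : Fin (n / 3)) = i := τ.injective h2
      rw [← h3]
      exact x.2
  set π : Fin (n / 3) → Equiv.Perm (Fin 3) := fun i =>
    if val3 zeta (c' (τ i)) = val3 zeta (c i) then 1 else Equiv.swap 1 2 with hπ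
  obtain ⟨σ, hσ⟩ := exists_perm_eq (fun x : Fin (n / 3) × Fin 3 => pt 3 x.1 x.2)
    (fun x => pt 3 (τ x.1) (π x.1 x.2)) pt_inj
    (pt_triple_inj (fun i => τ i) τ.injective (fun i => ⇑(π i)) (fun i => (π i).injective))
  refine ⟨ga F σ • w, ga_smul_ne_zero σ hw0, fun i => ?_⟩
  have hτi0 : τ (τ⁻¹ i) = i := Equiv.apply_symm_apply τ i
  have hmem0 : c (τ⁻¹ i) = 0 ↔ c' i = 0 := by
    have h' := hmem (τ⁻¹ i)
    rw [hτi0] at h'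
    have h'' : (c (τ⁻¹ i) ≠ 0) ↔ (c' i ≠ 0) := by
      simpa [hs, hs', Finset.mem_filter] using h'
    exact not_iff_not.mp h''
  by_cases hcase : val3 zeta (c' (τ (τ⁻¹ i))) = val3 zeta (c (τ⁻¹ i))
  · -- orientation-preserving block
    have hπ1 : π (τ⁻¹ i) = 1 := by rw [hπ]; exact if_pos hcase
    have hp : ∀ j : Fin 3, pt 3 i j = σ (pt 3 (τ⁻¹ i) j) := by
      intro j
      rw [hσ (τ⁻¹ i, j)]
      show pt 3 i j = pt 3 (τ (τ⁻¹ i)) (π (τ⁻¹ i) j)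
      rw [hτi0, hπ1]
      rfl
    have e1 : stdCyc n i = σ * stdCyc n (τ⁻¹ i) * σ⁻¹ := by
      unfold stdCyc
      rw [hp 0, hp 1, hp 2, cyc3_conj]
    rw [e1, ga_smul_conj]
    have e2 : σ⁻¹ * (σ * stdCyc n (τ⁻¹ i) * σ⁻¹) * σ = stdCyc n (τ⁻¹ i) := by group
    rw [e2, hev (τ⁻¹ i)]
    rw [hτi0] at hcase
    rw [← hcase]
    exact smul_comm _ _ _
  · -- orientation-reversing block
    have hπ2 : π (τ⁻¹ i) = Equiv.swap 1 2 := by rw [hπ]; exact if_neg hcase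
    have hp : ∀ j : Fin 3, σ (pt 3 (τ⁻¹ i) j) = pt 3 i (Equiv.swap (1 : Fin 3) 2 j) := by
      intro j
      rw [hσ (τ⁻¹ i, j)]
      show pt 3 (τ (τ⁻¹ i)) (π (τ⁻¹ i) j) = _
      rw [hτi0, hπ2]
    have hp0 : σ (pt 3 (τ⁻¹ i) 0) = pt 3 i 0 := by rw [hp 0]; rfl
    have hp1 : σ (pt 3 (τ⁻¹ i) 2) = pt 3 i 1 := by rw [hp 2]; rfl
    have hp2 : σ (pt 3 (τ⁻¹ i) 1) = pt 3 i 2 := by rw [hp 1]; rfl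
    have e1 : stdCyc n i = σ * (stdCyc n (τ⁻¹ i) * stdCyc n (τ⁻¹ i)) * σ⁻¹ := by
      unfold stdCyc
      rw [← hp0, ← hp1, ← hp2, cyc3_conj]
      rw [cyc3_sq (stdCyc_pts_ne₁ (τ⁻¹ i)) (stdCyc_pts_ne₂ (τ⁻¹ i)) (stdCyc_pts_ne₃ (τ⁻¹ i))]
    rw [e1, ga_smul_conj]
    have e2 : σ⁻¹ * (σ * (stdCyc n (τ⁻¹ i) * stdCyc n (τ⁻¹ i)) * σ⁻¹) * σ
        = stdCyc n (τ⁻¹ i) * stdCyc n (τ⁻¹ i) := by group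
    rw [e2, ga_mul_smul, hev (τ⁻¹ i)]
    have e3 : ga F (stdCyc n (τ⁻¹ i)) • val3 zeta (c (τ⁻¹ i)) • w
        = val3 zeta (c (τ⁻¹ i)) • val3 zeta (c (τ⁻¹ i)) • w := by
      rw [smul_comm, hev (τ⁻¹ i)]
    rw [e3, smul_smul]
    have e4 : val3 zeta (c (τ⁻¹ i)) * val3 zeta (c (τ⁻¹ i)) = val3 zeta (c' i) := by
      rw [hτi0] at hcase
      rcases fin3_cases (c (τ⁻¹ i)) with h0 | h0 | h0 <;>
        rcases fin3_cases (c' i) with h1 | h1 | h1 <;> rw [h0, h1] at hcase hmem0 ⊢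
      · exact absurd rfl hcase
      · exact absurd (hmem0.mp rfl) (by decide)
      · exact absurd (hmem0.mp rfl) (by decide)
      · exact absurd (hmem0.mpr rfl) (by decide)
      · exact absurd rfl hcase
      · show zeta * zeta = val3 zeta 2
        show zeta * zeta = zeta ^ 2
        ring
      · exact absurd (hmem0.mpr rfl) (by decide)
      · show zeta ^ 2 * zeta ^ 2 = zeta
        linear_combination zeta * hz3
      · exact absurd rfl hcase
    rw [e4]
    exact smul_comm _ _ _

end






open Function
open scoped Classical

noncomputable section

variable {F : Type} [Field F] {n : ℕ} {M : Type*} [AddCommGroup M] [Module F M]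
  [Module (GA F n) M] [IsScalarTower F (GA F n) M]

lemma real3_zeta {zeta : F} (hz3 : zeta ^ 3 = 1) {c : Fin (n / 3) → Fin 3}
    (h : Real3 F n M zeta c) :
    HasZetaSystem F n M zeta (Finset.univ.filter (fun i => c i ≠ 0)).card := by
  classical
  obtain ⟨w, hw0, hev⟩ := h
  set s := Finset.univ.filter (fun i => c i ≠ 0) with hs
  set en := s.equivFin with hen
  set idx : Fin s.card → Fin (n / 3) := fun x => (en.symm x : Fin (n / 3)) with hidx
  have hidxinj : Injective idx := Subtype.val_injective.comp en.symm.injective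
  set π : Fin s.card → Equiv.Perm (Fin 3) := fun x =>
    if c (idx x) = 1 then 1 else Equiv.swap 1 2 with hπ
  refine ⟨fun x => pt 3 (idx x) (π x 0), fun x => pt 3 (idx x) (π x 1),
    fun x => pt 3 (idx x) (π x 2), w, ?_, hw0, ?_⟩
  · have heq : (fun x : Fin s.card × Fin 3 => if x.2 = (0 : Fin 3) then pt 3 (idx x.1) (π x.1 0)
        else if x.2 = (1 : Fin 3) then pt 3 (idx x.1) (π x.1 1) else pt 3 (idx x.1) (π x.1 2))
        = fun x : Fin s.card × Fin 3 => pt 3 (idx x.1) (π x.1 x.2) := by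
      funext x
      rcases x with ⟨x1, x2⟩
      fin_cases x2 <;> rfl
    rw [heq]
    exact pt_triple_inj idx hidxinj (fun x => ⇑(π x)) (fun x => (π x).injective)
  · intro x
    have hmem : c (idx x) ≠ 0 := (Finset.mem_filter.mp (en.symm x).2).2
    by_cases h1 : c (idx x) = 1
    · have hπ1 : π x = 1 := by rw [hπ]; exact if_pos h1
      have e : cyc3 (pt 3 (idx x) (π x 0)) (pt 3 (idx x) (π x 1)) (pt 3 (idx x) (π x 2))
          = stdCyc n (idx x) := by rw [hπ1]; rfl
      rw [e, hev, h1, algebraMap_smul]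
      rfl
    · have h2 : c (idx x) = 2 := by
        rcases fin3_cases (c (idx x)) with h' | h' | h'
        · exact absurd h' hmem
        · exact absurd h' h1
        · exact h'
      have hπ2 : π x = Equiv.swap 1 2 := by rw [hπ]; exact if_neg h1
      have e : cyc3 (pt 3 (idx x) (π x 0)) (pt 3 (idx x) (π x 1)) (pt 3 (idx x) (π x 2))
          = stdCyc n (idx x) * stdCyc n (idx x) := by
        rw [hπ2]
        have e0 : Equiv.swap (1 : Fin 3) 2 0 = 0 := by decide
        have e1 : Equiv.swap (1 : Fin 3) 2 1 = 2 := by decide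
        have e2 : Equiv.swap (1 : Fin 3) 2 2 = 1 := by decide
        rw [e0, e1, e2]
        exact (cyc3_sq (stdCyc_pts_ne₁ (idx x)) (stdCyc_pts_ne₂ (idx x))
          (stdCyc_pts_ne₃ (idx x))).symm
      rw [e, ga_mul_smul, hev, h2, show val3 zeta 2 = zeta ^ 2 from rfl]
      have e3 : ga F (stdCyc n (idx x)) • (zeta ^ 2 : F) • w
          = (zeta ^ 2 : F) • (zeta ^ 2 : F) • w := by
        rw [smul_comm, hev, h2]
        rfl
      rw [e3, smul_smul]
      have e4 : (zeta ^ 2 : F) * zeta ^ 2 = zeta := by linear_combination zeta * hz3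
      rw [e4, algebraMap_smul]

lemma real3_dim [FiniteDimensional F M] {zeta : F}
    (hz1 : zeta ≠ 1) (h21 : zeta ^ 2 ≠ 1) (hzz : zeta ^ 2 ≠ zeta) (r : ℕ)
    (hall : ∀ c : Fin (n / 3) → Fin 3, (Finset.univ.filter (fun i => c i ≠ 0)).card = r
      → Real3 F n M zeta c) :
    2 ^ r * (n / 3).choose r ≤ Module.finrank F M := by
  classical
  set cf : ({t : Finset (Fin (n / 3)) // t.card = r} × (Fin r → Bool)) → Fin (n / 3) → Fin 3 :=
    fun tb i =>
      if h : i ∈ tb.1.1 then (if tb.2 (Fin.cast tb.1.2 (tb.1.1.equivFin ⟨i, h⟩)) then 1 else 2)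
      else 0 with hcf
  have hsupp : ∀ tb, Finset.univ.filter (fun i => cf tb i ≠ 0) = tb.1.1 := by
    intro tb
    ext i
    simp only [Finset.mem_filter, Finset.mem_univ, true_and, hcf]
    constructor
    · intro hne
      by_contra hi
      rw [dif_neg hi] at hne
      exact hne rfl
    · intro hi
      rw [dif_pos hi]
      split <;> decide
  have hcards : ∀ tb, (Finset.univ.filter (fun i => cf tb i ≠ 0)).card = r := fun tb => by
    rw [hsupp tb]; exact tb.1.2
  have hch := fun tb => hall (cf tb) (hcards tb)
  choose w hw0 hev using hch
  set χ : ({t : Finset (Fin (n / 3)) // t.card = r} × (Fin r → Bool)) → Fin (n / 3) → F :=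
    fun tb i => val3 zeta (cf tb i) with hχ
  have hval3inj : Injective (val3 (F := F) zeta) := by
    intro j j' hj
    rcases fin3_cases j with rfl | rfl | rfl <;> rcases fin3_cases j' with rfl | rfl | rfl
    · rfl
    · exact absurd hj.symm hz1
    · exact absurd hj.symm h21
    · exact absurd hj hz1
    · rfl
    · exact absurd hj.symm hzz
    · exact absurd hj h21
    · exact absurd hj hzz
    · rfl
  have hχinj : Injective χ := by
    intro tb tb' h
    have hcf_eq : cf tb = cf tb' := by
      funext i
      exact hval3inj (congrFun h i)
    rcases tb with ⟨t, bb⟩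
    rcases tb' with ⟨t', bb'⟩
    have ht : t = t' := Subtype.ext (by
      rw [← hsupp (⟨t, bb⟩ : {t : Finset (Fin (n / 3)) // t.card = r} × (Fin r → Bool)),
        ← hsupp (⟨t', bb'⟩ : {t : Finset (Fin (n / 3)) // t.card = r} × (Fin r → Bool)), hcf_eq])
    subst ht
    have hbb : bb = bb' := by
      funext x
      set z : ↥t.1 := t.1.equivFin.symm (Fin.cast t.2.symm x) with hz
      have hzz' := congrFun hcf_eq (z : Fin (n / 3))
      simp only [hcf] at hzz'
      rw [dif_pos z.2, dif_pos z.2] at hzz'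
      have hee : t.1.equivFin ⟨(z : Fin (n / 3)), z.2⟩ = Fin.cast t.2.symm x := by
        have : (⟨(z : Fin (n / 3)), z.2⟩ : ↥t.1) = z := rfl
        rw [this, hz, Equiv.apply_symm_apply]
      rw [hee] at hzz'
      have hcast : Fin.cast t.2 (Fin.cast t.2.symm x) = x := rfl
      rw [hcast] at hzz'
      by_cases hb : bb x <;> by_cases hb' : bb' x
      · rw [hb, hb']
      · rw [if_pos hb, if_neg hb'] at hzz'
        exact absurd hzz' (by decide)
      · rw [if_neg hb, if_pos hb'] at hzz'
        exact absurd hzz' (by decide)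
      · have hf : bb x = false := by simpa using hb
        have hf' : bb' x = false := by simpa using hb'
        rw [hf, hf']
    rw [hbb]
  have hind := indepEigen (T3 (F := F) (n := n) (M := M)) χ hχinj w hw0 (by
    intro tb i
    show ga F (stdCyc n i) • w tb = χ tb i • w tb
    exact hev tb i)
  calc 2 ^ r * (n / 3).choose r
      = Fintype.card ({t : Finset (Fin (n / 3)) // t.card = r} × (Fin r → Bool)) := by
        rw [Fintype.card_prod, Fintype.card_finset_len, Fintype.card_fin, Fintype.card_fun,
          Fintype.card_bool, Fintype.card_fin, mul_comm]
    _ ≤ Module.finrank F M := hind.fintype_card_le_finrank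

theorem bound3 [FiniteDimensional F M] [Nontrivial M] {zeta : F}
    (hz1 : zeta ≠ 1) (hz3 : zeta ^ 3 = 1) (h21 : zeta ^ 2 ≠ 1) (hzz : zeta ^ 2 ≠ zeta)
    (hsum : 1 + zeta + zeta ^ 2 = 0) (h3 : (3 : F) = 1) :
    2 ^ (rank3 F n zeta M) * (n / 3).choose (rank3 F n zeta M) ≤ Module.finrank F M := by
  have hbdd : BddAbove {k : ℕ | HasZetaSystem F n M zeta k} :=
    ⟨n / 3, fun x hx => hasZeta_le hx⟩
  have hmem : HasZetaSystem F n M zeta (rank3 F n zeta M) :=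
    Nat.sSup_mem (s := {k : ℕ | HasZetaSystem F n M zeta k})
      ⟨0, show HasZetaSystem F n M zeta 0 from hasZeta_zero⟩ hbdd
  obtain ⟨c₁, hc₁r, hc₁⟩ := real3_of_zeta hz1 hz3 hsum h3 hmem
  have hle : (Finset.univ.filter (fun i => c₁ i ≠ 0)).card ≤ rank3 F n zeta M :=
    le_csSup hbdd (real3_zeta hz3 hc₁)
  have heq : (Finset.univ.filter (fun i => c₁ i ≠ 0)).card = rank3 F n zeta M :=
    le_antisymm hle hc₁r
  exact real3_dim hz1 h21 hzz _ (fun c hcr => real3_perm hz3 hc₁ (by rw [heq, hcr]))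

end




section AuxChar
lemma neg_one_ne_one_of_charP (F : Type) [Field F] (p : ℕ) [CharP F p] (hp : p ≠ 2) :
    (-1 : F) ≠ 1 := by
  intro hc
  have h2 : ((2 : ℕ) : F) = 0 := by
    push_cast
    linear_combination -hc
  have hdvd : p ∣ 2 := (CharP.cast_eq_zero_iff F p 2).mp h2
  rcases (Nat.dvd_prime Nat.prime_two).mp hdvd with h1 | h1
  · exact CharP.char_ne_one F p h1
  · exact hp h1


end AuxChar

/-- Theorem 3.3 / `TDimRank`: let `V` be a nonzero `F𝔖ₙ`-module and
`r := 𝔯(V)`.  If `p ≠ 2` then `dim V ≥ C(⌊n/2⌋, r)`; if `p = 2` then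
`dim V ≥ 2^r · C(⌊n/3⌋, r)` (the rank for `p = 2` computed with respect to a primitive
cube root of unity `ζ ∈ F`). -/
theorem statement4 (F : Type) [Field F] (p : ℕ) [CharP F p] (n : ℕ)
    (V : Type) [AddCommGroup V] [Module F V] [Module (GA F n) V]
    [IsScalarTower F (GA F n) V] [FiniteDimensional F V] [Nontrivial V] :
    (p ≠ 2 → (n / 2).choose (modRank2 F n V) ≤ Module.finrank F V) ∧
    (p = 2 → ∀ zeta : F, IsPrimitiveRoot zeta 3 →
      2 ^ (modRank3 F n zeta V) * (n / 3).choose (modRank3 F n zeta V) ≤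
        Module.finrank F V) := by
  constructor
  · intro hp
    have hpm : (-1 : F) ≠ 1 := neg_one_ne_one_of_charP F p hp
    rcases Nat.eq_zero_or_pos (modRank2 F n V) with h0 | hpos
    · rw [h0, Nat.choose_zero_right]
      exact Module.finrank_pos
    · have hbddS : BddAbove {r : ℕ | ∃ A B : Submodule (GA F n) V, A ≤ B ∧
          IsSimpleModule (GA F n) (↥B ⧸ (A.comap B.subtype)) ∧
          r = irrRank2 F n (↥B ⧸ (A.comap B.subtype))} := by
        refine ⟨n / 2, fun x hx => ?_⟩
        obtain ⟨A, B, hAB, hsimp, hreq⟩ := hx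
        rw [hreq]
        exact le_trans (min_le_left _ _) (csSup_le' (fun k hk => hasNeg_le hk))
      have hne : {r : ℕ | ∃ A B : Submodule (GA F n) V, A ≤ B ∧
          IsSimpleModule (GA F n) (↥B ⧸ (A.comap B.subtype)) ∧
          r = irrRank2 F n (↥B ⧸ (A.comap B.subtype))}.Nonempty := by
        by_contra hcon
        rw [Set.not_nonempty_iff_eq_empty] at hcon
        have hz : modRank2 F n V = 0 := by
          unfold modRank2
          rw [hcon]
          exact csSup_empty
        omega
      obtain ⟨A, B, hAB, hsimp, hreq⟩ :
          modRank2 F n V ∈ {r : ℕ | ∃ A B : Submodule (GA F n) V, A ≤ B ∧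
            IsSimpleModule (GA F n) (↥B ⧸ (A.comap B.subtype)) ∧
            r = irrRank2 F n (↥B ⧸ (A.comap B.subtype))} :=
        Nat.sSup_mem hne hbddS
      haveI := hsimp
      haveI : Nontrivial (↥B ⧸ (A.comap B.subtype)) := IsSimpleModule.nontrivial (GA F n) (↥B ⧸ (A.comap B.subtype))
      haveI hfdB : FiniteDimensional F ↥B :=
        FiniteDimensional.of_injective (LinearMap.restrictScalars F B.subtype)
          Subtype.val_injective
      haveI : FiniteDimensional F (↥B ⧸ (A.comap B.subtype)) :=
        Module.Finite.of_surjective (LinearMap.restrictScalars F (A.comap B.subtype).mkQ)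
          (Submodule.Quotient.mk_surjective _)
      have hdim : Module.finrank F (↥B ⧸ (A.comap B.subtype)) ≤ Module.finrank F V := by
        have h1 : Module.finrank F (↥B ⧸ (A.comap B.subtype)) ≤ Module.finrank F ↥B := by
          have hsurj : Function.Surjective
              (LinearMap.restrictScalars F (A.comap B.subtype).mkQ) :=
            Submodule.Quotient.mk_surjective _
          have h2 := LinearMap.finrank_range_add_finrank_ker
            (LinearMap.restrictScalars F (A.comap B.subtype).mkQ)
          rw [LinearMap.range_eq_top.mpr hsurj, finrank_top] at h2
          omega
        exact le_trans h1 (LinearMap.finrank_le_finrank_of_injective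
          (f := LinearMap.restrictScalars F B.subtype) Subtype.val_injective)
      have hb := bound2 (F := F) (n := n) (M := ↥B ⧸ (A.comap B.subtype)) hpm
      rw [← hreq] at hb
      exact le_trans hb hdim
  · intro hp zeta hζ
    subst hp
    have h2 : (2 : F) = 0 := by exact_mod_cast CharP.cast_eq_zero F 2
    have h3 : (3 : F) = 1 := by linear_combination h2
    have hz3 : zeta ^ 3 = 1 := hζ.pow_eq_one
    have hz1 : zeta ≠ 1 := hζ.ne_one (by norm_num)
    have hsum : 1 + zeta + zeta ^ 2 = 0 := by
      have hfac : (zeta - 1) * (1 + zeta + zeta ^ 2) = 0 := by linear_combination hz3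
      rcases mul_eq_zero.mp hfac with h' | h'
      · exact absurd (by linear_combination h' : zeta = 1) hz1
      · exact h'
    have h21 : zeta ^ 2 ≠ 1 := by
      intro h'
      apply hz1
      calc zeta = zeta * 1 := (mul_one _).symm
        _ = zeta * zeta ^ 2 := by rw [h']
        _ = zeta ^ 3 := by ring
        _ = 1 := hz3
    have hzz : zeta ^ 2 ≠ zeta := by
      intro h'
      apply hz1
      have : (1 : F) = zeta := by
        calc (1 : F) = zeta ^ 3 := hz3.symm
          _ = zeta ^ 2 * zeta := by ring
          _ = zeta * zeta := by rw [h']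
          _ = zeta ^ 2 := by ring
          _ = zeta := h'
      exact this.symm
    rcases Nat.eq_zero_or_pos (modRank3 F n zeta V) with h0 | hpos
    · rw [h0, Nat.choose_zero_right, pow_zero, one_mul]
      exact Module.finrank_pos
    · have hbddS : BddAbove {r : ℕ | ∃ A B : Submodule (GA F n) V, A ≤ B ∧
          IsSimpleModule (GA F n) (↥B ⧸ (A.comap B.subtype)) ∧
          r = rank3 F n zeta (↥B ⧸ (A.comap B.subtype))} := by
        refine ⟨n / 3, fun x hx => ?_⟩
        obtain ⟨A, B, hAB, hsimp, hreq⟩ := hx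
        rw [hreq]
        exact csSup_le' (fun k hk => hasZeta_le hk)
      have hne : {r : ℕ | ∃ A B : Submodule (GA F n) V, A ≤ B ∧
          IsSimpleModule (GA F n) (↥B ⧸ (A.comap B.subtype)) ∧
          r = rank3 F n zeta (↥B ⧸ (A.comap B.subtype))}.Nonempty := by
        by_contra hcon
        rw [Set.not_nonempty_iff_eq_empty] at hcon
        have hz : modRank3 F n zeta V = 0 := by
          unfold modRank3
          rw [hcon]
          exact csSup_empty
        omega
      obtain ⟨A, B, hAB, hsimp, hreq⟩ :
          modRank3 F n zeta V ∈ {r : ℕ | ∃ A B : Submodule (GA F n) V, A ≤ B ∧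
            IsSimpleModule (GA F n) (↥B ⧸ (A.comap B.subtype)) ∧
            r = rank3 F n zeta (↥B ⧸ (A.comap B.subtype))} :=
        Nat.sSup_mem hne hbddS
      haveI := hsimp
      haveI : Nontrivial (↥B ⧸ (A.comap B.subtype)) := IsSimpleModule.nontrivial (GA F n) (↥B ⧸ (A.comap B.subtype))
      haveI hfdB : FiniteDimensional F ↥B :=
        FiniteDimensional.of_injective (LinearMap.restrictScalars F B.subtype)
          Subtype.val_injective
      haveI : FiniteDimensional F (↥B ⧸ (A.comap B.subtype)) :=
        Module.Finite.of_surjective (LinearMap.restrictScalars F (A.comap B.subtype).mkQ)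
          (Submodule.Quotient.mk_surjective _)
      have hdim : Module.finrank F (↥B ⧸ (A.comap B.subtype)) ≤ Module.finrank F V := by
        have h1 : Module.finrank F (↥B ⧸ (A.comap B.subtype)) ≤ Module.finrank F ↥B := by
          have hsurj : Function.Surjective
              (LinearMap.restrictScalars F (A.comap B.subtype).mkQ) :=
            Submodule.Quotient.mk_surjective _
          have h2' := LinearMap.finrank_range_add_finrank_ker
            (LinearMap.restrictScalars F (A.comap B.subtype).mkQ)
          rw [LinearMap.range_eq_top.mpr hsurj, finrank_top] at h2'
          omega
        exact le_trans h1 (LinearMap.finrank_le_finrank_of_injective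
          (f := LinearMap.restrictScalars F B.subtype) Subtype.val_injective)
      have hb := bound3 (F := F) (n := n) (M := ↥B ⧸ (A.comap B.subtype)) hz1 hz3 h21 hzz hsum h3
      rw [← hreq] at hb
      exact le_trans hb hdim



end KLT
end

section
/- Define f(i,j) := max(1, |i − j|) for integers i,j and F(i,k) := ∏_{j=1}^{k} f(i,j) for k ≥ 0. Then for all integers i > 0 and j, k ≥ 0, F(i, j+k) ≤ 3^{j+k} · F(i,j) · F(i,k). -/
/-!
Formalization of statements from "Level, rank, and tensor growth of representations of
symmetric groups" by Kleshchev, Larsen, Tiep.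
-/

namespace KLT

open scoped Classical TensorProduct

/-- `f(i,j) = max(1, |i-j|)`. -/
def ff (i j : ℤ) : ℤ := max 1 |i - j|

/-- `F(i,k) = ∏_{j=1}^{k} f(i,j)` (the empty product `F(i,0)` is `1`). -/
noncomputable def FF (i : ℤ) (k : ℕ) : ℤ := ∏ j ∈ Finset.Icc (1 : ℤ) (k : ℤ), ff i j

/-! ### Auxiliary natural number lemmas -/

lemma choose_le_two_pow (n k : ℕ) : n.choose k ≤ 2 ^ n := by
  rcases le_or_gt k n with h | h
  · calc n.choose k ≤ ∑ m ∈ Finset.range (n + 1), n.choose m :=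
          Finset.single_le_sum (fun _ _ => Nat.zero_le _) (Finset.mem_range.mpr (by omega))
      _ = 2 ^ n := Nat.sum_range_choose n
  · simp [Nat.choose_eq_zero_of_lt h]

lemma fac_mul_fac_le (a b : ℕ) : a.factorial * b.factorial ≤ (a + b).factorial := by
  have h := Nat.add_choose_mul_factorial_mul_factorial a b
  have hc : 1 ≤ (a + b).choose b := Nat.choose_pos (Nat.le_add_left b a)
  calc a.factorial * b.factorial = 1 * (a.factorial * b.factorial) := (one_mul _).symm
    _ ≤ (a + b).choose b * (a.factorial * b.factorial) := Nat.mul_le_mul_right _ hc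
    _ = (a + b).choose b * a.factorial * b.factorial := (mul_assoc _ _ _).symm
    _ = (a + b).factorial := h

lemma fac3_step (n a b c : ℕ) (hn : a + b + c = n + 1) (hab : a ≤ b) (hcb : c ≤ b)
    (ih : ∀ a b c : ℕ, a + b + c = n →
      n.factorial ≤ 3 ^ n * (a.factorial * b.factorial * c.factorial)) :
    (n + 1).factorial ≤ 3 ^ (n + 1) * (a.factorial * b.factorial * c.factorial) := by
  obtain ⟨b', rfl⟩ : ∃ b', b = b' + 1 := ⟨b - 1, by omega⟩
  have h1 := ih a b' c (by omega)
  have h2 : n + 1 ≤ 3 * (b' + 1) := by omega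
  calc (n + 1).factorial = (n + 1) * n.factorial := Nat.factorial_succ n
    _ ≤ (3 * (b' + 1)) * (3 ^ n * (a.factorial * b'.factorial * c.factorial)) :=
        Nat.mul_le_mul h2 h1
    _ = 3 ^ (n + 1) * (a.factorial * ((b' + 1) * b'.factorial) * c.factorial) := by ring
    _ = 3 ^ (n + 1) * (a.factorial * (b' + 1).factorial * c.factorial) := by
        rw [Nat.factorial_succ]

lemma fac3 : ∀ n a b c : ℕ, a + b + c = n →
    n.factorial ≤ 3 ^ n * (a.factorial * b.factorial * c.factorial) := by
  intro n
  induction n with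
  | zero =>
      intro a b c h
      obtain ⟨rfl, rfl, rfl⟩ : a = 0 ∧ b = 0 ∧ c = 0 := by omega
      simp
  | succ n ih =>
      intro a b c h
      rcases le_total a b with h1 | h1
      · rcases le_total c b with h2 | h2
        · exact fac3_step n a b c h h1 h2 ih
        · have hres := fac3_step n a c b (by omega) (by omega) (by omega) ih
          have heq : 3 ^ (n + 1) * (a.factorial * c.factorial * b.factorial)
              = 3 ^ (n + 1) * (a.factorial * b.factorial * c.factorial) := by ring
          rw [heq] at hres
          exact hres
      · rcases le_total c a with h2 | h2
        · have hres := fac3_step n b a c (by omega) h1 h2 ih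
          have heq : 3 ^ (n + 1) * (b.factorial * a.factorial * c.factorial)
              = 3 ^ (n + 1) * (a.factorial * b.factorial * c.factorial) := by ring
          rw [heq] at hres
          exact hres
        · have hres := fac3_step n b c a (by omega) (by omega) (by omega) ih
          have heq : 3 ^ (n + 1) * (b.factorial * c.factorial * a.factorial)
              = 3 ^ (n + 1) * (a.factorial * b.factorial * c.factorial) := by ring
          rw [heq] at hres
          exact hres

lemma case2_nat (m j k : ℕ) (hm : 1 ≤ m) (hj : m ≤ j) (hk : m ≤ k) :
    (m - 1).factorial * (j + k - m).factorial ≤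
      3 ^ (j + k) * ((m - 1).factorial * (j - m).factorial)
        * ((m - 1).factorial * (k - m).factorial) := by
  have h1 := fac3 (j + k - m) m (j - m) (k - m) (by omega)
  have hmf : m.factorial = m * (m - 1).factorial := by
    obtain ⟨m', rfl⟩ : ∃ m', m = m' + 1 := ⟨m - 1, by omega⟩
    simp [Nat.factorial_succ]
  have hm3 : m ≤ 3 ^ m :=
    le_trans (Nat.lt_two_pow_self (n := m)).le (Nat.pow_le_pow_left (by norm_num) m)
  have key : (j + k - m).factorial ≤
      3 ^ (j + k) * ((m - 1).factorial * (j - m).factorial * (k - m).factorial) := by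
    calc (j + k - m).factorial
        ≤ 3 ^ (j + k - m) * (m.factorial * (j - m).factorial * (k - m).factorial) := h1
      _ = 3 ^ (j + k - m) * m *
            ((m - 1).factorial * (j - m).factorial * (k - m).factorial) := by rw [hmf]; ring
      _ ≤ 3 ^ (j + k - m) * 3 ^ m *
            ((m - 1).factorial * (j - m).factorial * (k - m).factorial) :=
          Nat.mul_le_mul_right _ (Nat.mul_le_mul_left _ hm3)
      _ = 3 ^ (j + k) * ((m - 1).factorial * (j - m).factorial * (k - m).factorial) := by
          rw [← pow_add]
          have : j + k - m + m = j + k := by omega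
          rw [this]
  calc (m - 1).factorial * (j + k - m).factorial
      ≤ (m - 1).factorial *
          (3 ^ (j + k) * ((m - 1).factorial * (j - m).factorial * (k - m).factorial)) :=
        Nat.mul_le_mul_left _ key
    _ = 3 ^ (j + k) * ((m - 1).factorial * (j - m).factorial)
          * ((m - 1).factorial * (k - m).factorial) := by ring

lemma case3_nat (m j k : ℕ) (hm : 1 ≤ m) (hj : j < m) (hk : m ≤ k) :
    (m - 1).factorial * (j + k - m).factorial ≤
      3 ^ (j + k) * (m - 1).descFactorial j * ((m - 1).factorial * (k - m).factorial) := by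
  set c := k - m with hc
  have hnm : j + k - m = j + c := by omega
  rw [hnm]
  have h1 : (j + c).factorial = (j + c).choose c * j.factorial * c.factorial :=
    (Nat.add_choose_mul_factorial_mul_factorial j c).symm
  have h2 : (j + c).choose c ≤ 2 ^ (j + c) := choose_le_two_pow _ _
  have h3 : j.factorial ≤ (m - 1).descFactorial j := by
    rw [Nat.descFactorial_eq_factorial_mul_choose]
    calc j.factorial = j.factorial * 1 := (mul_one _).symm
      _ ≤ j.factorial * (m - 1).choose j :=
          Nat.mul_le_mul_left _ (Nat.choose_pos (by omega))
  have h4 : 2 ^ (j + c) ≤ 3 ^ (j + k) := by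
    calc 2 ^ (j + c) ≤ 3 ^ (j + c) := Nat.pow_le_pow_left (by norm_num) _
      _ ≤ 3 ^ (j + k) := Nat.pow_le_pow_right (by norm_num) (by omega)
  calc (m - 1).factorial * (j + c).factorial
      = (m - 1).factorial * ((j + c).choose c * j.factorial * c.factorial) := by rw [h1]
    _ ≤ (m - 1).factorial * (3 ^ (j + k) * (m - 1).descFactorial j * c.factorial) :=
        Nat.mul_le_mul_left _
          (Nat.mul_le_mul (Nat.mul_le_mul (le_trans h2 h4) h3) le_rfl)
    _ = 3 ^ (j + k) * (m - 1).descFactorial j * ((m - 1).factorial * c.factorial) := by ring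

lemma case5_nat (m j k : ℕ) (hm : 1 ≤ m) (hj : j < m) (hk : k < m) (hmn : m ≤ j + k) :
    (m - 1).factorial * (j + k - m).factorial ≤
      3 ^ (j + k) * (m - 1).descFactorial j * (m - 1).descFactorial k := by
  have hD : (m - 1 - j).factorial * (m - 1).descFactorial j = (m - 1).factorial :=
    Nat.factorial_mul_descFactorial (by omega)
  have hE : (m - 1 - k).factorial * (m - 1).descFactorial k = (m - 1).factorial :=
    Nat.factorial_mul_descFactorial (by omega)
  apply Nat.le_of_mul_le_mul_right _
    (show 0 < (m - 1 - j).factorial * (m - 1 - k).factorial from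
      Nat.mul_pos (Nat.factorial_pos _) (Nat.factorial_pos _))
  have tri : (j + k - m).factorial * ((m - 1 - j).factorial * (m - 1 - k).factorial) ≤
      (m - 1).factorial := by
    calc (j + k - m).factorial * ((m - 1 - j).factorial * (m - 1 - k).factorial)
        = (j + k - m).factorial * (m - 1 - j).factorial * (m - 1 - k).factorial := by ring
      _ ≤ ((j + k - m) + (m - 1 - j)).factorial * (m - 1 - k).factorial :=
          Nat.mul_le_mul_right _ (fac_mul_fac_le _ _)
      _ ≤ (((j + k - m) + (m - 1 - j)) + (m - 1 - k)).factorial := fac_mul_fac_le _ _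
      _ = (m - 2).factorial := by
          have : ((j + k - m) + (m - 1 - j)) + (m - 1 - k) = m - 2 := by omega
          rw [this]
      _ ≤ (m - 1).factorial := Nat.factorial_le (by omega)
  have h3 : 1 ≤ 3 ^ (j + k) := Nat.one_le_pow _ _ (by norm_num)
  calc (m - 1).factorial * (j + k - m).factorial *
        ((m - 1 - j).factorial * (m - 1 - k).factorial)
      = (m - 1).factorial *
          ((j + k - m).factorial * ((m - 1 - j).factorial * (m - 1 - k).factorial)) := by ring
    _ ≤ (m - 1).factorial * (m - 1).factorial := Nat.mul_le_mul_left _ tri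
    _ = 1 * ((m - 1).factorial * (m - 1).factorial) := (one_mul _).symm
    _ ≤ 3 ^ (j + k) * ((m - 1).factorial * (m - 1).factorial) := Nat.mul_le_mul_right _ h3
    _ = 3 ^ (j + k) * (m - 1).descFactorial j * (m - 1).descFactorial k *
          ((m - 1 - j).factorial * (m - 1 - k).factorial) := by
        nth_rewrite 1 [← hD]
        nth_rewrite 1 [← hE]
        ring

/-! ### Lemmas about `FF` -/

lemma one_le_ff (i j : ℤ) : 1 ≤ ff i j := le_max_left _ _

lemma one_le_FF (i : ℤ) (k : ℕ) : 1 ≤ FF i k := by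
  unfold FF
  calc (1 : ℤ) = ∏ _j ∈ Finset.Icc (1 : ℤ) (k : ℤ), 1 := by simp
    _ ≤ ∏ j ∈ Finset.Icc (1 : ℤ) (k : ℤ), ff i j :=
      Finset.prod_le_prod (fun _ _ => zero_le_one) (fun j _ => one_le_ff i j)

lemma Icc_insert_top (k : ℕ) :
    Finset.Icc (1 : ℤ) ((k : ℤ) + 1) = insert ((k : ℤ) + 1) (Finset.Icc (1 : ℤ) (k : ℤ)) := by
  ext x
  simp only [Finset.mem_Icc, Finset.mem_insert]
  omega

lemma FF_succ (i : ℤ) (k : ℕ) : FF i (k + 1) = FF i k * ff i ((k : ℤ) + 1) := by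
  unfold FF
  have h : ((k + 1 : ℕ) : ℤ) = (k : ℤ) + 1 := by push_cast; ring
  rw [h, Icc_insert_top, Finset.prod_insert (by simp)]
  ring

lemma FF_desc (m k : ℕ) (h : k < m) : FF (m : ℤ) k = ((m - 1).descFactorial k : ℤ) := by
  induction k with
  | zero =>
      have he : Finset.Icc (1 : ℤ) ((0 : ℕ) : ℤ) = ∅ := by
        apply Finset.Icc_eq_empty; norm_num
      simp [FF, he]
  | succ k ihk =>
      have hk : k < m := by omega
      rw [FF_succ, ihk hk, Nat.descFactorial_succ]
      have hff : ff (m : ℤ) ((k : ℤ) + 1) = ((m - 1 - k : ℕ) : ℤ) := by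
        unfold ff
        rw [abs_of_nonneg (by omega : (0 : ℤ) ≤ (m : ℤ) - ((k : ℤ) + 1)),
          max_eq_right (by omega : (1 : ℤ) ≤ (m : ℤ) - ((k : ℤ) + 1))]
        omega
      rw [hff]
      push_cast
      ring

lemma FF_fac (m k : ℕ) (hm : 1 ≤ m) (h : m ≤ k) :
    FF (m : ℤ) k = (((m - 1).factorial * (k - m).factorial : ℕ) : ℤ) := by
  induction k, h using Nat.le_induction with
  | base =>
      obtain ⟨m', rfl⟩ : ∃ m', m = m' + 1 := ⟨m - 1, by omega⟩
      rw [FF_succ, FF_desc (m' + 1) m' (by omega)]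
      have hff : ff ((m' + 1 : ℕ) : ℤ) ((m' : ℤ) + 1) = 1 := by
        unfold ff
        have : ((m' + 1 : ℕ) : ℤ) - ((m' : ℤ) + 1) = 0 := by push_cast; ring
        rw [this]
        simp
      rw [hff]
      simp [Nat.descFactorial_self]
  | succ k hk ihk =>
      rw [FF_succ, ihk]
      have hff : ff (m : ℤ) ((k : ℤ) + 1) = ((k + 1 - m : ℕ) : ℤ) := by
        unfold ff
        rw [abs_of_nonpos (by omega : (m : ℤ) - ((k : ℤ) + 1) ≤ 0),
          max_eq_right (by omega : (1 : ℤ) ≤ -((m : ℤ) - ((k : ℤ) + 1)))]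
        omega
      rw [hff]
      have h2 : k + 1 - m = (k - m) + 1 := by omega
      rw [h2, Nat.factorial_succ]
      push_cast
      ring

lemma FF_add (i : ℤ) (j k : ℕ) :
    FF i (j + k) = FF i j * ∏ t ∈ Finset.Icc (1 : ℤ) (k : ℤ), ff i ((j : ℤ) + t) := by
  induction k with
  | zero =>
      have he : Finset.Icc (1 : ℤ) ((0 : ℕ) : ℤ) = ∅ := by
        apply Finset.Icc_eq_empty; norm_num
      simp [he]
  | succ k ihk =>
      have h : j + (k + 1) = (j + k) + 1 := rfl
      rw [h, FF_succ, ihk]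
      have hcast : ((k + 1 : ℕ) : ℤ) = (k : ℤ) + 1 := by push_cast; ring
      rw [hcast, Icc_insert_top, Finset.prod_insert (by simp)]
      have harg : ((j + k : ℕ) : ℤ) + 1 = (j : ℤ) + ((k : ℤ) + 1) := by push_cast; ring
      rw [harg]
      ring

/-- for all integers `i > 0` and `j, k ≥ 0`,
`F(i, j+k) ≤ 3^{j+k} · F(i,j) · F(i,k)`. -/
theorem statement10 (i : ℤ) (hi : 0 < i) (j k : ℕ) :
    FF i (j + k) ≤ 3 ^ (j + k) * FF i j * FF i k := by
  by_cases hbig : (j : ℤ) + (k : ℤ) < i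
  · -- `i > j + k`: termwise comparison
    rw [FF_add i j k]
    have hP : (∏ t ∈ Finset.Icc (1 : ℤ) (k : ℤ), ff i ((j : ℤ) + t)) ≤ FF i k := by
      unfold FF
      apply Finset.prod_le_prod
      · intro t _
        exact le_trans zero_le_one (one_le_ff _ _)
      · intro t ht
        rw [Finset.mem_Icc] at ht
        unfold ff
        rw [abs_of_nonneg (by omega : (0 : ℤ) ≤ i - ((j : ℤ) + t)),
          abs_of_nonneg (by omega : (0 : ℤ) ≤ i - t)]
        exact max_le_max le_rfl (by omega)
    have h1 : (0 : ℤ) ≤ FF i j := le_trans zero_le_one (one_le_FF i j)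
    have h2 : (0 : ℤ) ≤ FF i k := le_trans zero_le_one (one_le_FF i k)
    have h3 : (1 : ℤ) ≤ 3 ^ (j + k) := by exact_mod_cast Nat.one_le_pow (j + k) 3 (by norm_num)
    calc FF i j * ∏ t ∈ Finset.Icc (1 : ℤ) (k : ℤ), ff i ((j : ℤ) + t)
        ≤ FF i j * FF i k := mul_le_mul_of_nonneg_left hP h1
      _ = 1 * (FF i j * FF i k) := (one_mul _).symm
      _ ≤ 3 ^ (j + k) * (FF i j * FF i k) := by
          apply mul_le_mul_of_nonneg_right h3 (mul_nonneg h1 h2)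
      _ = 3 ^ (j + k) * FF i j * FF i k := (mul_assoc _ _ _).symm
  · push_neg at hbig
    obtain ⟨m, rfl⟩ : ∃ m : ℕ, i = (m : ℤ) := ⟨i.toNat, (Int.toNat_of_nonneg hi.le).symm⟩
    have hm : 1 ≤ m := by omega
    have hmn : m ≤ j + k := by omega
    rcases le_or_gt m j with hj | hj
    · rcases le_or_gt m k with hk | hk
      · -- m ≤ j and m ≤ k
        rw [FF_fac m (j + k) hm hmn, FF_fac m j hm hj, FF_fac m k hm hk]
        exact_mod_cast case2_nat m j k hm hj hk
      · -- k < m ≤ j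
        rw [FF_fac m (j + k) hm hmn, FF_fac m j hm hj, FF_desc m k hk]
        have h := case3_nat m k j hm hk hj
        have h' : (m - 1).factorial * (j + k - m).factorial ≤
            3 ^ (j + k) * ((m - 1).factorial * (j - m).factorial)
              * (m - 1).descFactorial k := by
          calc (m - 1).factorial * (j + k - m).factorial
              = (m - 1).factorial * (k + j - m).factorial := by rw [Nat.add_comm j k]
            _ ≤ 3 ^ (k + j) * (m - 1).descFactorial k
                  * ((m - 1).factorial * (j - m).factorial) := h
            _ = 3 ^ (j + k) * ((m - 1).factorial * (j - m).factorial)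
                  * (m - 1).descFactorial k := by rw [Nat.add_comm k j]; ring
        exact_mod_cast h'
    · rcases le_or_gt m k with hk | hk
      · -- j < m ≤ k
        rw [FF_fac m (j + k) hm hmn, FF_desc m j hj, FF_fac m k hm hk]
        exact_mod_cast case3_nat m j k hm hj hk
      · -- j < m, k < m, m ≤ j + k
        rw [FF_fac m (j + k) hm hmn, FF_desc m j hj, FF_desc m k hk]
        exact_mod_cast case5_nat m j k hm hj hk hmn

end KLT
end

section
/- Let λ be a partition of l, μ a partition of m, and ν := λ + μ the partition of l + m with ν_i = λ_i + μ_i for all i. Then G(ν) ≤ 3^{l+m} · G(λ) · G(μ), where G(κ) := ∏_{(i,j)∈κ} max(1, |i − j|), the product over all boxes (i,j) of the Young diagram of κ. -/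
/-!
Formalization of statements from "Level, rank, and tensor growth of representations of
symmetric groups" by Kleshchev, Larsen, Tiep.
-/

namespace KLT

open scoped Classical TensorProduct

/-- `G(κ) = ∏_{(i,j) ∈ κ} max(1, |i - j|)`, the product over all boxes of the Young
diagram of `κ` (here boxes are indexed `0`-based; `|i - j|` is unchanged by the shift). -/
def GFun {n : ℕ} (kappa : n.Partition) : ℕ :=
  ∏ i ∈ Finset.range (Multiset.card kappa.parts),
    ∏ j ∈ Finset.range (rowLen kappa i), max 1 ((i : ℤ) - (j : ℤ)).natAbs


open Nat

/-- The per-row factor product. -/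
def rowProd (i r : ℕ) : ℕ := ∏ j ∈ Finset.range r, max 1 ((i : ℤ) - (j : ℤ)).natAbs

lemma sum_getD (L : List ℕ) : ∑ i ∈ Finset.range L.length, L.getD i 0 = L.sum := by
  induction L with
  | nil => simp
  | cons a t ih =>
    rw [List.length_cons, Finset.sum_range_succ']
    simp only [List.getD_cons_succ, List.getD_cons_zero, ih, List.sum_cons]
    omega

lemma tri_aux : ∀ n x y z : ℕ, x + y + z = n →
    Nat.factorial n ≤ 3 ^ n * (x.factorial * y.factorial * z.factorial) := by
  intro n
  induction n with
  | zero =>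
    intro x y z h
    have hx : x = 0 ∧ y = 0 ∧ z = 0 := by omega
    simp [hx.1, hx.2.1, hx.2.2]
  | succ n ih =>
    have key : ∀ x y z : ℕ, x + y + z = n + 1 → x ≤ z → y ≤ z →
        Nat.factorial (n+1) ≤ 3 ^ (n+1) * (x.factorial * y.factorial * z.factorial) := by
      intro x y z h hx hy
      have hz : 0 < z := by omega
      have h1 : x + y + (z - 1) = n := by omega
      have h2 := ih x y (z - 1) h1
      calc Nat.factorial (n+1) = (n+1) * Nat.factorial n := rfl
        _ ≤ (n+1) * (3 ^ n * (x.factorial * y.factorial * (z-1).factorial)) :=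
            Nat.mul_le_mul_left _ h2
        _ ≤ (3 * z) * (3 ^ n * (x.factorial * y.factorial * (z-1).factorial)) :=
            Nat.mul_le_mul_right _ (by omega)
        _ = 3 ^ (n+1) * (x.factorial * y.factorial * (z * (z-1).factorial)) := by ring
        _ = 3 ^ (n+1) * (x.factorial * y.factorial * z.factorial) := by
            rw [Nat.mul_factorial_pred hz.ne']
    intro x y z h
    rcases le_total x z with h1 | h1
    · rcases le_total y z with h2 | h2
      · exact key x y z h h1 h2
      · -- y is max
        have := key x z y (by omega) (by omega) h2
        have e : x.factorial * z.factorial * y.factorial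
            = x.factorial * y.factorial * z.factorial := by ring
        rwa [e] at this
    · rcases le_total y x with h2 | h2
      · -- x is max
        have := key z y x (by omega) h1 h2
        have e : z.factorial * y.factorial * x.factorial
            = x.factorial * y.factorial * z.factorial := by ring
        rwa [e] at this
      · -- y is max
        have := key x z y (by omega) (by omega) (by omega)
        have e : x.factorial * z.factorial * y.factorial
            = x.factorial * y.factorial * z.factorial := by ring
        rwa [e] at this

lemma tri (x y z : ℕ) :
    Nat.factorial (x + y + z) ≤ 3 ^ (x + y + z) * (x.factorial * y.factorial * z.factorial) :=
  tri_aux _ x y z rfl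

lemma two_bound (p q : ℕ) :
    Nat.factorial (p + q) ≤ 3 ^ (p + q) * (p.factorial * q.factorial) := by
  have := tri p q 0
  simpa using this

lemma descFactorial_add_le (i a b : ℕ) :
    i.descFactorial (a + b) ≤ i.descFactorial a * i.descFactorial b := by
  induction b with
  | zero => simp
  | succ b ih =>
    have h : a + (b + 1) = (a + b) + 1 := by omega
    rw [h, Nat.descFactorial_succ, Nat.descFactorial_succ]
    calc (i - (a + b)) * i.descFactorial (a + b)
        ≤ (i - b) * (i.descFactorial a * i.descFactorial b) :=
          Nat.mul_le_mul (by omega) ih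
      _ = i.descFactorial a * ((i - b) * i.descFactorial b) := by ring

lemma rowProd_eq (i r : ℕ) :
    rowProd i r = if r ≤ i then i.descFactorial r
      else i.factorial * (r - i - 1).factorial := by
  induction r with
  | zero => simp [rowProd]
  | succ r ih =>
    rw [rowProd, Finset.prod_range_succ, ← rowProd, ih]
    rcases lt_trichotomy r i with h | h | h
    · rw [if_pos (by omega : r ≤ i)]
      rcases Nat.lt_or_ge (r+1) (i+1) with h2 | h2
      · rw [if_pos (by omega : r + 1 ≤ i)]
        have hm : max 1 ((i : ℤ) - (r : ℤ)).natAbs = i - r := by omega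
        rw [hm, Nat.descFactorial_succ]
        ring
      · -- r + 1 = i + 1 impossible since r < i means r+1 ≤ i... careful
        omega
    · subst h
      rw [if_pos le_rfl, if_neg (by omega)]
      have hm : max 1 ((r : ℤ) - (r : ℤ)).natAbs = 1 := by omega
      rw [hm, Nat.descFactorial_self]
      simp
    · rw [if_neg (by omega), if_neg (by omega)]
      have hm : max 1 ((i : ℤ) - (r : ℤ)).natAbs = r - i := by omega
      rw [hm]
      have h2 : r + 1 - i - 1 = r - i := by omega
      rw [h2, mul_assoc]
      congr 1
      have : 0 < r - i := by omega
      calc (r - i - 1).factorial * (r - i) = (r - i) * (r - i - 1).factorial := by ring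
        _ = (r - i).factorial := Nat.mul_factorial_pred this.ne'

lemma descFactorial_pos' {i a : ℕ} (h : a ≤ i) : 0 < i.descFactorial a := by
  rcases Nat.eq_zero_or_pos (i.descFactorial a) with h0 | h0
  · exact absurd (Nat.descFactorial_eq_zero_iff_lt.mp h0) (by omega)
  · exact h0

lemma factorial_le_descFactorial {i a : ℕ} (h : a ≤ i) :
    a.factorial ≤ i.descFactorial a := by
  calc a.factorial = a.descFactorial a := (Nat.descFactorial_self a).symm
    _ ≤ i.descFactorial a := Nat.descFactorial_le a h

lemma rowProd_key (i a b : ℕ) :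
    rowProd i (a + b) ≤ 3 ^ (a + b) * (rowProd i a * rowProd i b) := by
  rw [rowProd_eq, rowProd_eq, rowProd_eq]
  rcases le_or_gt (a + b) i with hab | hab
  · rw [if_pos hab, if_pos (by omega), if_pos (by omega)]
    calc i.descFactorial (a + b) ≤ i.descFactorial a * i.descFactorial b :=
          descFactorial_add_le i a b
      _ ≤ 3 ^ (a + b) * (i.descFactorial a * i.descFactorial b) :=
          Nat.le_mul_of_pos_left _ (Nat.pow_pos (by norm_num))
  · rw [if_neg (by omega)]
    rcases le_or_gt a i with ha | ha
    · rcases le_or_gt b i with hb | hb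
      · -- case 2 : a ≤ i, b ≤ i, i < a + b
        rw [if_pos ha, if_pos hb]
        have hmain : i.factorial * (a + b - i - 1).factorial
            ≤ i.descFactorial a * i.descFactorial b := by
          have hc : 0 < (i - a).factorial * (i - b).factorial :=
            Nat.mul_pos (Nat.factorial_pos _) (Nat.factorial_pos _)
          refine Nat.le_of_mul_le_mul_right ?_ hc
          have e1 : i.descFactorial a * i.descFactorial b
              * ((i - a).factorial * (i - b).factorial)
              = ((i - a).factorial * i.descFactorial a)
                * ((i - b).factorial * i.descFactorial b) := by ring
          rw [e1, Nat.factorial_mul_descFactorial ha, Nat.factorial_mul_descFactorial hb]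
          -- need : i! * (a+b-i-1)! * ((i-a)! * (i-b)!) ≤ i! * i!
          have h1 : (a + b - i - 1).factorial * (i - a).factorial
              ≤ (a + b - i - 1 + (i - a)).factorial :=
            Nat.le_of_dvd (Nat.factorial_pos _)
              (Nat.factorial_mul_factorial_dvd_factorial_add _ _)
          have h2 : (a + b - i - 1 + (i - a)).factorial * (i - b).factorial
              ≤ (a + b - i - 1 + (i - a) + (i - b)).factorial :=
            Nat.le_of_dvd (Nat.factorial_pos _)
              (Nat.factorial_mul_factorial_dvd_factorial_add _ _)
          have h3 : a + b - i - 1 + (i - a) + (i - b) = i - 1 := by omega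
          calc i.factorial * (a + b - i - 1).factorial
                * ((i - a).factorial * (i - b).factorial)
              = i.factorial * ((a + b - i - 1).factorial * (i - a).factorial
                  * (i - b).factorial) := by ring
            _ ≤ i.factorial * ((a + b - i - 1 + (i - a)).factorial * (i - b).factorial) :=
                Nat.mul_le_mul_left _ (Nat.mul_le_mul_right _ h1)
            _ ≤ i.factorial * (a + b - i - 1 + (i - a) + (i - b)).factorial :=
                Nat.mul_le_mul_left _ h2
            _ = i.factorial * (i - 1).factorial := by rw [h3]
            _ ≤ i.factorial * i.factorial :=
                Nat.mul_le_mul_left _ (Nat.factorial_le (by omega))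
        calc i.factorial * (a + b - i - 1).factorial
            ≤ i.descFactorial a * i.descFactorial b := hmain
          _ ≤ 3 ^ (a + b) * (i.descFactorial a * i.descFactorial b) :=
              Nat.le_mul_of_pos_left _ (Nat.pow_pos (by norm_num))
      · -- case 3a : a ≤ i < b
        rw [if_pos ha, if_neg (by omega)]
        have h2 := two_bound a (b - i - 1)
        have e : a + (b - i - 1) = a + b - i - 1 := by omega
        rw [e] at h2
        have h3 : (3:ℕ) ^ (a + b - i - 1) ≤ 3 ^ (a + b) :=
          Nat.pow_le_pow_right (by norm_num) (by omega)
        have h4 : a.factorial ≤ i.descFactorial a := factorial_le_descFactorial ha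
        calc i.factorial * (a + b - i - 1).factorial
            ≤ i.factorial * (3 ^ (a + b - i - 1)
                * (a.factorial * (b - i - 1).factorial)) := Nat.mul_le_mul_left _ h2
          _ = 3 ^ (a + b - i - 1) * (a.factorial * (i.factorial * (b - i - 1).factorial)) := by
              ring
          _ ≤ 3 ^ (a + b) * (i.descFactorial a * (i.factorial * (b - i - 1).factorial)) :=
              Nat.mul_le_mul h3 (Nat.mul_le_mul_right _ h4)
    · rcases le_or_gt b i with hb | hb
      · -- case 3b : b ≤ i < a
        rw [if_neg (by omega), if_pos hb]
        have h2 := two_bound b (a - i - 1)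
        have e : b + (a - i - 1) = a + b - i - 1 := by omega
        rw [e] at h2
        have h3 : (3:ℕ) ^ (a + b - i - 1) ≤ 3 ^ (a + b) :=
          Nat.pow_le_pow_right (by norm_num) (by omega)
        have h4 : b.factorial ≤ i.descFactorial b := factorial_le_descFactorial hb
        calc i.factorial * (a + b - i - 1).factorial
            ≤ i.factorial * (3 ^ (a + b - i - 1)
                * (b.factorial * (a - i - 1).factorial)) := Nat.mul_le_mul_left _ h2
          _ = 3 ^ (a + b - i - 1) * (b.factorial
                * (i.factorial * (a - i - 1).factorial)) := by ring
          _ ≤ 3 ^ (a + b) * (i.descFactorial b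
                * (i.factorial * (a - i - 1).factorial)) :=
              Nat.mul_le_mul h3 (Nat.mul_le_mul_right _ h4)
          _ = 3 ^ (a + b) * (i.factorial * (a - i - 1).factorial * i.descFactorial b) := by
              ring
      · -- case 4 : i < a, i < b
        rw [if_neg (by omega), if_neg (by omega)]
        set x := a - i - 1 with hx
        set y := b - i - 1 with hy
        have h2 := tri x y (i + 1)
        have e : x + y + (i + 1) = a + b - i - 1 := by omega
        rw [e] at h2
        have hfac : (i + 1).factorial = (i + 1) * i.factorial := rfl
        have h5 : i + 1 ≤ 3 ^ (i + 1) :=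
          le_of_lt (Nat.lt_pow_self (n := i + 1) (by norm_num))
        calc i.factorial * (a + b - i - 1).factorial
            ≤ i.factorial * (3 ^ (a + b - i - 1)
                * (x.factorial * y.factorial * (i + 1).factorial)) :=
              Nat.mul_le_mul_left _ h2
          _ = 3 ^ (a + b - i - 1) * (i + 1)
                * (i.factorial * x.factorial * (i.factorial * y.factorial)) := by
              rw [hfac]; ring
          _ ≤ 3 ^ (a + b - i - 1) * 3 ^ (i + 1)
                * (i.factorial * x.factorial * (i.factorial * y.factorial)) :=
              Nat.mul_le_mul_right _ (Nat.mul_le_mul_left _ h5)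
          _ = 3 ^ (a + b - i - 1 + (i + 1))
                * (i.factorial * x.factorial * (i.factorial * y.factorial)) := by
              rw [← pow_add]
          _ = 3 ^ (a + b)
                * (i.factorial * x.factorial * (i.factorial * y.factorial)) := by
              congr 2
              omega


lemma rowLen_eq_zero' {n : ℕ} (kappa : n.Partition) {i : ℕ}
    (h : Multiset.card kappa.parts ≤ i) : rowLen kappa i = 0 := by
  apply List.getD_eq_default
  simpa using h

lemma rowLen_pos' {n : ℕ} (kappa : n.Partition) {i : ℕ}
    (h : i < Multiset.card kappa.parts) : 0 < rowLen kappa i := by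
  have hlen : i < ((kappa.parts.sort (· ≤ ·)).reverse).length := by simpa using h
  rw [rowLen, List.getD_eq_getElem _ _ hlen]
  apply kappa.parts_pos
  have hmem : ((kappa.parts.sort (· ≤ ·)).reverse)[i] ∈ (kappa.parts.sort (· ≤ ·)).reverse :=
    List.getElem_mem hlen
  rw [List.mem_reverse] at hmem
  exact (Multiset.mem_sort _).mp hmem

lemma GFun_eq_prod {n : ℕ} (kappa : n.Partition) {N : ℕ}
    (h : Multiset.card kappa.parts ≤ N) :
    GFun kappa = ∏ i ∈ Finset.range N, rowProd i (rowLen kappa i) := by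
  have h0 : GFun kappa
      = ∏ i ∈ Finset.range (Multiset.card kappa.parts), rowProd i (rowLen kappa i) := rfl
  rw [h0]
  apply Finset.prod_subset (Finset.range_subset_range.mpr h)
  intro i _ hi
  rw [Finset.mem_range, not_lt] at hi
  rw [rowLen_eq_zero' kappa hi]
  simp [rowProd]

lemma sum_rowLen {n : ℕ} (kappa : n.Partition) :
    ∑ i ∈ Finset.range (Multiset.card kappa.parts), rowLen kappa i = n := by
  have hlen : ((kappa.parts.sort (· ≤ ·)).reverse).length = Multiset.card kappa.parts := by
    simp
  have h1 := sum_getD ((kappa.parts.sort (· ≤ ·)).reverse)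
  rw [hlen] at h1
  have h2 : ((kappa.parts.sort (· ≤ ·)).reverse).sum = n := by
    rw [List.sum_reverse]
    have h : ((kappa.parts.sort (· ≤ ·) : List ℕ) : Multiset ℕ) = kappa.parts :=
      Multiset.sort_eq _ _
    calc (kappa.parts.sort (· ≤ ·)).sum
        = ((kappa.parts.sort (· ≤ ·) : List ℕ) : Multiset ℕ).sum := (Multiset.sum_coe _).symm
      _ = kappa.parts.sum := by rw [h]
      _ = n := kappa.parts_sum
  show ∑ i ∈ Finset.range (Multiset.card kappa.parts),
      ((kappa.parts.sort (· ≤ ·)).reverse).getD i 0 = n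
  rw [h1, h2]

/-- if `λ ⊢ l`, `μ ⊢ m` and `ν = λ + μ` is the componentwise sum
(a partition of `l + m`), then `G(ν) ≤ 3^{l+m} · G(λ) · G(μ)`. -/
theorem statement11 {l m : ℕ} (lam : l.Partition) (mu : m.Partition)
    (nu : (l + m).Partition) (hsum : ∀ i : ℕ, rowLen nu i = rowLen lam i + rowLen mu i) :
    GFun nu ≤ 3 ^ (l + m) * GFun lam * GFun mu := by
  have hl : Multiset.card lam.parts ≤ Multiset.card nu.parts := by
    by_contra hc
    push_neg at hc
    have h1 : 0 < rowLen lam (Multiset.card nu.parts) := rowLen_pos' lam hc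
    have h2 : rowLen nu (Multiset.card nu.parts) = 0 := rowLen_eq_zero' nu le_rfl
    have h3 := hsum (Multiset.card nu.parts)
    omega
  have hmm : Multiset.card mu.parts ≤ Multiset.card nu.parts := by
    by_contra hc
    push_neg at hc
    have h1 : 0 < rowLen mu (Multiset.card nu.parts) := rowLen_pos' mu hc
    have h2 : rowLen nu (Multiset.card nu.parts) = 0 := rowLen_eq_zero' nu le_rfl
    have h3 := hsum (Multiset.card nu.parts)
    omega
  set N := Multiset.card nu.parts with hN
  calc GFun nu = ∏ i ∈ Finset.range N, rowProd i (rowLen nu i) := GFun_eq_prod nu le_rfl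
    _ ≤ ∏ i ∈ Finset.range N,
          3 ^ (rowLen nu i) * (rowProd i (rowLen lam i) * rowProd i (rowLen mu i)) := by
        apply Finset.prod_le_prod'
        intro i _
        rw [hsum i]
        exact rowProd_key i _ _
    _ = 3 ^ (∑ i ∈ Finset.range N, rowLen nu i)
          * ((∏ i ∈ Finset.range N, rowProd i (rowLen lam i))
            * (∏ i ∈ Finset.range N, rowProd i (rowLen mu i))) := by
        rw [Finset.prod_mul_distrib, Finset.prod_mul_distrib, Finset.prod_pow_eq_pow_sum]
    _ = 3 ^ (l + m) * GFun lam * GFun mu := by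
        rw [sum_rowLen nu, ← GFun_eq_prod lam hl, ← GFun_eq_prod mu hmm]
        ring


end KLT
end
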